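/- arXiv:2102.01716 — 3 statements merged into one kernel-verified Lean document; each statement's English description precedes it below -/
import Mathlib

section
/- Demand inversion as a subgradient relation: let 𝒴 be a finite set, let ε be a random vector in ℝ^𝒴 with distribution P such that E[max_{y ∈ 𝒴} |ε_y|] < ∞, and define G(δ) = E[max_{y ∈ 𝒴} {δ_y + ε_y}] for δ ∈ ℝ^𝒴. Then G is convex, and for any probability vector q on 𝒴 and any δ ∈ ℝ^𝒴, the following are equivalent: (i) there exists a random variable Y defined jointly with ε, with distribution q, such that Y ∈ argmax_{y ∈ 𝒴} {δ_y + ε_y} almost surely; (ii) q is a subgradient of G at δ, i.e. G(δ') ≥ G(δ) + Σ_{y ∈ 𝒴} q_y (δ'_y − δ_y) for all δ' ∈ ℝ^𝒴. -/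
open MeasureTheory



set_option linter.unusedSectionVars false
set_option maxHeartbeats 1000000

namespace DemandInv

open Finset Filter Topology

variable {m : ℕ} [NeZero m]


variable {m : ℕ} [NeZero m]

noncomputable def msup (f : Fin m → ℝ) : ℝ := Finset.univ.sup' Finset.univ_nonempty f

lemma iSup_eq_msup (f : Fin m → ℝ) : (⨆ y, f y) = msup f :=
  (Finset.sup'_univ_eq_ciSup f).symm

lemma le_msup (f : Fin m → ℝ) (y : Fin m) : f y ≤ msup f :=
  Finset.le_sup' f (Finset.mem_univ y)

lemma msup_le {f : Fin m → ℝ} {a : ℝ} (h : ∀ y, f y ≤ a) : msup f ≤ a :=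
  Finset.sup'_le _ _ (fun y _ => h y)

lemma exists_msup (f : Fin m → ℝ) : ∃ y, msup f = f y := by
  obtain ⟨y, _, hy⟩ := Finset.exists_mem_eq_sup' (Finset.univ_nonempty (α := Fin m)) f
  exact ⟨y, hy⟩

lemma msup_nonneg_abs (f : Fin m → ℝ) : 0 ≤ msup (fun y => |f y|) := by
  obtain ⟨y⟩ := (inferInstance : Nonempty (Fin m))
  exact le_trans (abs_nonneg (f y)) (le_msup (fun y => |f y|) y)

lemma abs_le_msup_abs (f : Fin m → ℝ) (y : Fin m) : |f y| ≤ msup (fun y => |f y|) :=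
  le_msup (fun y => |f y|) y

lemma abs_msup_add_le (c e : Fin m → ℝ) :
    |msup (fun y => c y + e y)| ≤ msup (fun y => |c y|) + msup (fun y => |e y|) := by
  rw [abs_le]
  constructor
  · obtain ⟨y⟩ := (inferInstance : Nonempty (Fin m))
    have h1 : -( |c y| + |e y| ) ≤ c y + e y := by
      have := neg_abs_le (c y); have := neg_abs_le (e y); linarith
    have h2 : c y + e y ≤ msup (fun y => c y + e y) := le_msup (fun y => c y + e y) y
    have h3 : |c y| ≤ msup (fun y => |c y|) := le_msup (fun y => |c y|) y
    have h4 : |e y| ≤ msup (fun y => |e y|) := le_msup (fun y => |e y|) y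
    linarith
  · apply msup_le
    intro y
    have h1 : c y ≤ |c y| := le_abs_self _
    have h2 : e y ≤ |e y| := le_abs_self _
    have h3 : |c y| ≤ msup (fun y => |c y|) := le_msup (fun y => |c y|) y
    have h4 : |e y| ≤ msup (fun y => |e y|) := le_msup (fun y => |e y|) y
    linarith

lemma continuous_msup_comp {α : Type*} [TopologicalSpace α] (f : Fin m → α → ℝ)
    (hf : ∀ y, Continuous (f y)) : Continuous (fun a => msup (fun y => f y a)) := by
  unfold msup
  exact Continuous.finset_sup'_apply Finset.univ_nonempty (fun i _ => hf i)

lemma integrable_msup_add (P : Measure (Fin m → ℝ)) [IsProbabilityMeasure P]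
    (hint : Integrable (fun e => ⨆ y, |e y|) P) (c : Fin m → ℝ) :
    Integrable (fun e => msup (fun y => c y + e y)) P := by
  have hint' : Integrable (fun e => msup (fun y => |e y|)) P := by
    simpa only [iSup_eq_msup] using hint
  apply Integrable.mono' ((integrable_const (msup (fun y => |c y|))).add hint')
  · exact (continuous_msup_comp _ (fun y => continuous_const.add (continuous_apply y))).aestronglyMeasurable
  · filter_upwards with e
    simpa using abs_msup_add_le c e



/-- the set of `e` where `y` is an argmax of `δ + e` -/
def Csel (δ : Fin m → ℝ) (y : Fin m) : Set (Fin m → ℝ) := {e | ∀ y', δ y' + e y' ≤ δ y + e y}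

lemma measurableSet_Csel (δ : Fin m → ℝ) (y : Fin m) : MeasurableSet (Csel δ y) := by
  have : Csel δ y = ⋂ y', {e : Fin m → ℝ | δ y' + e y' ≤ δ y + e y} := by
    ext e; simp [Csel, Set.mem_iInter]
  rw [this]
  exact MeasurableSet.iInter fun y' =>
    measurableSet_le (measurable_const.add (measurable_pi_apply y'))
      (measurable_const.add (measurable_pi_apply y))

noncomputable def Arg (δ e : Fin m → ℝ) : Finset (Fin m) := by
  classical exact Finset.univ.filter (fun y => ∀ y', δ y' + e y' ≤ δ y + e y)

lemma mem_Arg {δ e : Fin m → ℝ} {y : Fin m} :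
    y ∈ Arg δ e ↔ ∀ y', δ y' + e y' ≤ δ y + e y := by
  classical simp [Arg]

lemma Arg_nonempty (δ e : Fin m → ℝ) : (Arg δ e).Nonempty := by
  obtain ⟨y, _, hy⟩ := Finset.exists_max_image (Finset.univ : Finset (Fin m))
    (fun y => δ y + e y) Finset.univ_nonempty
  exact ⟨y, mem_Arg.2 fun y' => hy y' (Finset.mem_univ y')⟩

lemma Arg_eq_msup {δ e : Fin m → ℝ} {y : Fin m} (hy : y ∈ Arg δ e) :
    δ y + e y = msup (fun y' => δ y' + e y') :=
  le_antisymm (le_msup (fun y' => δ y' + e y') y) (msup_le (mem_Arg.1 hy))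

/-- value of `β` on the argmax set, 0 for the empty set -/
noncomputable def val (β : Fin m → ℝ) (T : Finset (Fin m)) : ℝ :=
  if h : T.Nonempty then T.sup' h β else 0

lemma le_val {β : Fin m → ℝ} {T : Finset (Fin m)} {y : Fin m} (hy : y ∈ T) : β y ≤ val β T := by
  rw [val, dif_pos ⟨y, hy⟩]; exact Finset.le_sup' β hy

lemma exists_val {β : Fin m → ℝ} {T : Finset (Fin m)} (h : T.Nonempty) :
    ∃ y ∈ T, val β T = β y := by
  obtain ⟨y, hy, hv⟩ := Finset.exists_mem_eq_sup' h β
  exact ⟨y, hy, by rw [val, dif_pos h]; exact hv⟩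

lemma abs_val_le (β : Fin m → ℝ) {T : Finset (Fin m)} (h : T.Nonempty) :
    |val β T| ≤ msup (fun y => |β y|) := by
  obtain ⟨y, hy, hv⟩ := exists_val (β := β) h
  rw [hv]; exact abs_le_msup_abs β y

lemma msup_perturb (δ β e : Fin m → ℝ) :
    ∃ t0 > 0, ∀ t : ℝ, 0 < t → t ≤ t0 →
      msup (fun y => δ y + t * β y + e y) = msup (fun y => δ y + e y) + t * val β (Arg δ e) := by
  classical
  set T := Arg δ e with hTdef
  have hT : T.Nonempty := Arg_nonempty δ e
  set M := msup (fun y => δ y + e y) with hM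
  set C := msup (fun y => |β y|) with hC
  have hC0 : 0 ≤ C := msup_nonneg_abs β
  obtain ⟨ys, hys, hvys⟩ := exists_val (β := β) hT
  have hub : ∀ y ∈ T, ∀ t : ℝ, 0 ≤ t → δ y + t * β y + e y ≤ M + t * val β T := by
    intro y hy t ht
    have h1 : δ y + e y = M := Arg_eq_msup hy
    have h2 : β y ≤ val β T := le_val hy
    nlinarith
  have hlow : ∀ t : ℝ, M + t * val β T ≤ msup (fun y => δ y + t * β y + e y) := by
    intro t
    have h1 : δ ys + e ys = M := Arg_eq_msup hys
    have := le_msup (fun y => δ y + t * β y + e y) ys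
    rw [hvys]; linarith
  by_cases hB : (Finset.univ \ T).Nonempty
  · set g := (Finset.univ \ T).inf' hB (fun y => M - (δ y + e y)) with hg
    have hg0 : 0 < g := by
      rw [hg, Finset.lt_inf'_iff]
      intro y hy
      rw [Finset.mem_sdiff] at hy
      have hyn : ¬ (∀ y', δ y' + e y' ≤ δ y + e y) := fun h => hy.2 (mem_Arg.2 h)
      push_neg at hyn
      obtain ⟨y', hy'⟩ := hyn
      have := le_msup (fun y' => δ y' + e y') y'
      simp only [← hM] at this
      linarith
    refine ⟨g / (2 * C + 1), by positivity, fun t ht ht0 => ?_⟩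
    apply le_antisymm
    · apply msup_le
      intro y
      by_cases hy : y ∈ T
      · exact hub y hy t ht.le
      · have hyB : y ∈ Finset.univ \ T := Finset.mem_sdiff.2 ⟨Finset.mem_univ y, hy⟩
        have h1 : g ≤ M - (δ y + e y) := Finset.inf'_le _ hyB
        have h2 : β y ≤ C := (abs_le.1 (abs_le_msup_abs β y)).2
        have h3 : -C ≤ val β T := by
          have := (abs_le.1 (abs_val_le β hT)).1; linarith
        have h4 : t * (2 * C + 1) ≤ g := by
          have h5 : (0:ℝ) < 2 * C + 1 := by positivity
          rw [le_div_iff₀ h5] at ht0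
          linarith
        nlinarith
    · exact hlow t
  · refine ⟨1, one_pos, fun t ht _ => ?_⟩
    apply le_antisymm
    · apply msup_le
      intro y
      have hy : y ∈ T := by
        by_contra hyn
        exact hB ⟨y, Finset.mem_sdiff.2 ⟨Finset.mem_univ y, hyn⟩⟩
      exact hub y hy t ht.le
    · exact hlow t




lemma mem_Csel_iff {δ e : Fin m → ℝ} {y : Fin m} : e ∈ Csel δ y ↔ y ∈ Arg δ e := by
  rw [mem_Arg]; rfl

def atomSet (δ : Fin m → ℝ) (T : Finset (Fin m)) : Set (Fin m → ℝ) := {e | Arg δ e = T}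

lemma measurableSet_atomSet (δ : Fin m → ℝ) (T : Finset (Fin m)) :
    MeasurableSet (atomSet δ T) := by
  have h : atomSet δ T = ⋂ y, (if y ∈ T then Csel δ y else (Csel δ y)ᶜ) := by
    ext e
    simp only [atomSet, Set.mem_setOf_eq, Set.mem_iInter]
    constructor
    · intro h y
      split_ifs with hy
      · exact mem_Csel_iff.2 (by rw [h]; exact hy)
      · intro hc
        exact hy (by rw [← h]; exact mem_Csel_iff.1 hc)
    · intro h
      ext y
      have hy := h y
      constructor
      · intro hA
        by_contra hT'
        rw [if_neg hT'] at hy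
        exact hy (mem_Csel_iff.2 hA)
      · intro hT'
        rw [if_pos hT'] at hy
        exact mem_Csel_iff.1 hy
  rw [h]
  exact MeasurableSet.iInter fun y => by
    split_ifs
    exacts [measurableSet_Csel δ y, (measurableSet_Csel δ y).compl]

lemma atom_pairwise_disjoint (δ : Fin m → ℝ) :
    Set.PairwiseDisjoint (↑(Finset.univ : Finset (Finset (Fin m)))) (atomSet δ) := by
  intro T _ T' _ hne
  apply Set.disjoint_left.2
  intro e heT heT'
  exact hne (heT.symm.trans heT')

lemma atom_cover (δ : Fin m → ℝ) :
    ⋃ T ∈ (Finset.univ : Finset (Finset (Fin m))), atomSet δ T = Set.univ := by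
  ext e
  simp only [Set.mem_iUnion, Set.mem_univ, iff_true]
  exact ⟨Arg δ e, Finset.mem_univ _, rfl⟩

lemma sum_measure_atom (δ : Fin m → ℝ) (P : Measure (Fin m → ℝ)) [IsProbabilityMeasure P] :
    ∑ T : Finset (Fin m), P (atomSet δ T) = 1 := by
  rw [← measure_biUnion_finset (atom_pairwise_disjoint δ) (fun T _ => measurableSet_atomSet δ T),
    atom_cover δ, measure_univ]

noncomputable def phi (δ β : Fin m → ℝ) (e : Fin m → ℝ) : ℝ := val β (Arg δ e)

lemma phi_eq_sum_indicator (δ β : Fin m → ℝ) (e : Fin m → ℝ) :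
    phi δ β e = ∑ T : Finset (Fin m), Set.indicator (atomSet δ T) (fun _ => val β T) e := by
  rw [Finset.sum_eq_single_of_mem (Arg δ e) (Finset.mem_univ _)]
  · rw [Set.indicator_of_mem (by exact rfl : e ∈ atomSet δ (Arg δ e))]
    rfl
  · intro T _ hT
    exact Set.indicator_of_notMem (fun h => hT h.symm) _

lemma measurable_phi (δ β : Fin m → ℝ) : Measurable (phi δ β) := by
  have : phi δ β = fun e => ∑ T : Finset (Fin m), Set.indicator (atomSet δ T) (fun _ => val β T) e :=
    funext (phi_eq_sum_indicator δ β)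
  rw [this]
  exact Finset.measurable_sum _ fun T _ =>
    (measurable_const.indicator (measurableSet_atomSet δ T))

lemma integral_phi (δ β : Fin m → ℝ) (P : Measure (Fin m → ℝ)) [IsProbabilityMeasure P] :
    ∫ e, phi δ β e ∂P = ∑ T : Finset (Fin m), val β T * (P (atomSet δ T)).toReal := by
  have h1 : ∫ e, phi δ β e ∂P
      = ∑ T : Finset (Fin m), ∫ e, Set.indicator (atomSet δ T) (fun _ => val β T) e ∂P := by
    rw [integral_congr_ae (Filter.Eventually.of_forall (phi_eq_sum_indicator δ β))]
    exact integral_finset_sum _ fun T _ =>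
      (integrable_const (val β T)).indicator (measurableSet_atomSet δ T)
  rw [h1]
  apply Finset.sum_congr rfl
  intro T _
  rw [integral_indicator_const (val β T) (measurableSet_atomSet δ T)]
  rw [smul_eq_mul, mul_comm]
  rfl

lemma abs_phi_le (δ β e : Fin m → ℝ) : |phi δ β e| ≤ msup (fun y => |β y|) :=
  abs_val_le β (Arg_nonempty δ e)

lemma tendsto_quotient (P : Measure (Fin m → ℝ)) [IsProbabilityMeasure P]
    (hint : Integrable (fun e => ⨆ y, |e y|) P) (δ β : Fin m → ℝ) :
    Tendsto (fun n : ℕ =>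
        ((∫ e, msup (fun y => δ y + (1 / ((n:ℝ)+1)) * β y + e y) ∂P)
          - ∫ e, msup (fun y => δ y + e y) ∂P) / (1 / ((n:ℝ)+1)))
      atTop (𝓝 (∫ e, phi δ β e ∂P)) := by
  set C := msup (fun y => |β y|) with hC
  have hC0 : 0 ≤ C := msup_nonneg_abs β
  set a : ℕ → ℝ := fun n => 1 / ((n:ℝ)+1) with ha
  have ha0 : ∀ n, 0 < a n := fun n => by positivity
  have haten : Tendsto a atTop (𝓝 0) := tendsto_one_div_add_atTop_nhds_zero_nat
  set F : ℕ → (Fin m → ℝ) → ℝ := fun n e =>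
    (msup (fun y => δ y + a n * β y + e y) - msup (fun y => δ y + e y)) / a n with hF
  have hmono : ∀ (n : ℕ) (e : Fin m → ℝ), |msup (fun y => δ y + a n * β y + e y) - msup (fun y => δ y + e y)|
      ≤ a n * C := by
    intro n e
    rw [abs_le]
    constructor
    · have : msup (fun y => δ y + e y) ≤ msup (fun y => δ y + a n * β y + e y) + a n * C := by
        apply msup_le
        intro y
        have h2 : -C ≤ β y := (abs_le.1 (abs_le_msup_abs β y)).1
        have h3 : δ y + a n * β y + e y ≤ msup (fun y => δ y + a n * β y + e y) :=
          le_msup (fun y => δ y + a n * β y + e y) y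
        nlinarith [ha0 n]
      linarith
    · have : msup (fun y => δ y + a n * β y + e y) ≤ msup (fun y => δ y + e y) + a n * C := by
        apply msup_le
        intro y
        have h2 : β y ≤ C := (abs_le.1 (abs_le_msup_abs β y)).2
        have h3 : δ y + e y ≤ msup (fun y => δ y + e y) := le_msup (fun y => δ y + e y) y
        nlinarith [ha0 n]
      linarith
  have hFbound : ∀ (n : ℕ) (e : Fin m → ℝ), |F n e| ≤ C := by
    intro n e
    rw [hF, abs_div, abs_of_pos (ha0 n), div_le_iff₀ (ha0 n)]
    calc |msup (fun y => δ y + a n * β y + e y) - msup (fun y => δ y + e y)| ≤ a n * C :=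
          hmono n e
      _ = C * a n := mul_comm _ _
  have hFtend : ∀ (e : Fin m → ℝ), Tendsto (fun n => F n e) atTop (𝓝 (phi δ β e)) := by
    intro e
    obtain ⟨t0, ht0, hkey⟩ := msup_perturb δ β e
    apply Tendsto.congr' _ tendsto_const_nhds
    have hev : ∀ᶠ n in atTop, a n ≤ t0 := by
      have := haten.eventually (eventually_le_nhds ht0)  -- a n ≤ t0 eventually? careful
      filter_upwards [this] with n hn
      exact hn
    filter_upwards [hev] with n hn
    rw [hF]
    simp only
    rw [hkey (a n) (ha0 n) hn]
    field_simp
    show val β (Arg δ e) = _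
    rw [add_sub_cancel_left, mul_div_cancel_left₀ _ (ha0 n).ne']
  have hmain : Tendsto (fun n => ∫ e, F n e ∂P) atTop (𝓝 (∫ e, phi δ β e ∂P)) := by
    apply tendsto_integral_of_dominated_convergence (fun _ => C)
    · intro n
      apply Continuous.aestronglyMeasurable
      apply Continuous.div_const
      apply Continuous.sub
      · exact continuous_msup_comp _ (fun y => continuous_const.add (continuous_apply y))
      · exact continuous_msup_comp _ (fun y => continuous_const.add (continuous_apply y))
    · exact integrable_const C
    · intro n
      exact Filter.Eventually.of_forall fun e => by
        rw [Real.norm_eq_abs]; exact hFbound n e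
    · exact Filter.Eventually.of_forall hFtend
  have heq : ∀ n, (∫ e, F n e ∂P)
      = ((∫ e, msup (fun y => δ y + a n * β y + e y) ∂P)
          - ∫ e, msup (fun y => δ y + e y) ∂P) / a n := by
    intro n
    rw [hF]
    simp only
    rw [integral_div]
    congr 1
    exact integral_sub (integrable_msup_add P hint _) (integrable_msup_add P hint δ)
  have := hmain.congr (fun n => heq n)
  exact this



lemma flow_exists (p : Finset (Fin m) → ℝ) (hp0 : ∀ T, 0 ≤ p T) (hpe : p ∅ = 0)
    (q : Fin m → ℝ)
    (hsep : ∀ β : Fin m → ℝ, ∑ y, q y * β y ≤ ∑ T : Finset (Fin m), p T * val β T) :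
    ∃ x : Finset (Fin m) × Fin m → ℝ, (∀ i, 0 ≤ x i) ∧ (∀ T y, y ∉ T → x (T, y) = 0) ∧
      (∀ T, ∑ y, x (T, y) = p T) ∧ (∀ y, ∑ T : Finset (Fin m), x (T, y) = q y) := by
  classical
  set X : Set (Finset (Fin m) × Fin m → ℝ) :=
    {x | (∀ i, 0 ≤ x i) ∧ (∀ T y, y ∉ T → x (T, y) = 0) ∧ ∀ T, ∑ y, x (T, y) = p T} with hX
  set col : (Finset (Fin m) × Fin m → ℝ) → (Fin m → ℝ) := fun x y => ∑ T : Finset (Fin m), x (T, y) with hcol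
  -- greedy elements
  have hgreedy : ∀ β : Fin m → ℝ, ∃ x ∈ X, ∑ y, col x y * β y = ∑ T : Finset (Fin m), p T * val β T := by
    intro β
    have hsel : ∀ T : Finset (Fin m), T.Nonempty → ∃ y, y ∈ T ∧ val β T = β y := by
      intro T h
      obtain ⟨y, hy, hv⟩ := exists_val (β := β) h
      exact ⟨y, hy, hv⟩
    set x : Finset (Fin m) × Fin m → ℝ := fun i =>
      if h : i.1.Nonempty then (if i.2 = (hsel i.1 h).choose then p i.1 else 0) else 0 with hx
    have hxmem : x ∈ X := by
      refine ⟨?_, ?_, ?_⟩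
      · intro i
        rw [hx]
        dsimp only
        split_ifs
        · exact hp0 _
        · exact le_refl 0
        · exact le_refl 0
      · intro T y hy
        rw [hx]
        dsimp only
        split_ifs with h1 h2
        · exact absurd (h2 ▸ (hsel T h1).choose_spec.1) hy
        · rfl
        · rfl
      · intro T
        by_cases h : T.Nonempty
        · have : ∀ y, x (T, y) = if y = (hsel T h).choose then p T else 0 := by
            intro y; rw [hx]; dsimp only; rw [dif_pos h]
          rw [Finset.sum_congr rfl (fun y _ => this y)]
          rw [Finset.sum_ite_eq' Finset.univ ((hsel T h).choose) (fun _ => p T)]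
          simp
        · have hT : T = ∅ := Finset.not_nonempty_iff_eq_empty.1 h
          have : ∀ y, x (T, y) = 0 := by
            intro y; rw [hx]; dsimp only; rw [dif_neg h]
          rw [Finset.sum_congr rfl (fun y _ => this y), Finset.sum_const, smul_zero, hT, hpe]
    refine ⟨x, hxmem, ?_⟩
    have hswap : ∑ y, col x y * β y = ∑ T : Finset (Fin m), ∑ y, x (T, y) * β y := by
      rw [hcol]
      dsimp only
      simp only [Finset.sum_mul]
      rw [Finset.sum_comm]
    rw [hswap]
    apply Finset.sum_congr rfl
    intro T _
    by_cases h : T.Nonempty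
    · have hxy : ∀ y, x (T, y) * β y = if y = (hsel T h).choose then p T * β y else 0 := by
        intro y
        rw [hx]; dsimp only; rw [dif_pos h]
        split_ifs with h2
        · rfl
        · rw [zero_mul]
      rw [Finset.sum_congr rfl (fun y _ => hxy y)]
      rw [Finset.sum_ite_eq' Finset.univ ((hsel T h).choose) (fun y => p T * β y)]
      rw [if_pos (Finset.mem_univ _)]
      exact congrArg (fun r => p T * r) ((hsel T h).choose_spec.2).symm
    · have hT : T = ∅ := Finset.not_nonempty_iff_eq_empty.1 h
      have hz : ∀ y, x (T, y) * β y = 0 := by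
        intro y; rw [hx]; dsimp only; rw [dif_neg h, zero_mul]
      rw [Finset.sum_congr rfl (fun y _ => hz y), Finset.sum_const, smul_zero, hT, hpe, zero_mul]
  -- X is convex, compact; F is closed convex
  have hXconv : Convex ℝ X := by
    intro x hx' y hy' a b ha hb hab
    refine ⟨?_, ?_, ?_⟩
    · intro i
      simp only [Pi.add_apply, Pi.smul_apply, smul_eq_mul]
      exact add_nonneg (mul_nonneg ha (hx'.1 i)) (mul_nonneg hb (hy'.1 i))
    · intro T y' hy''
      simp only [Pi.add_apply, Pi.smul_apply, smul_eq_mul]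
      rw [hx'.2.1 T y' hy'', hy'.2.1 T y' hy'', mul_zero, mul_zero, add_zero]
    · intro T
      simp only [Pi.add_apply, Pi.smul_apply, smul_eq_mul]
      rw [Finset.sum_add_distrib, ← Finset.mul_sum, ← Finset.mul_sum, hx'.2.2 T, hy'.2.2 T,
        ← add_mul, hab, one_mul]
  have hXclosed : IsClosed X := by
    have h1 : IsClosed {x : Finset (Fin m) × Fin m → ℝ | ∀ i, 0 ≤ x i} := by
      rw [Set.setOf_forall]
      exact isClosed_iInter fun i => isClosed_le continuous_const (continuous_apply i)
    have h2 : IsClosed {x : Finset (Fin m) × Fin m → ℝ | ∀ T y, y ∉ T → x (T, y) = 0} := by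
      rw [Set.setOf_forall]
      apply isClosed_iInter
      intro T
      rw [Set.setOf_forall]
      apply isClosed_iInter
      intro y
      by_cases hy : y ∈ T
      · have : {x : Finset (Fin m) × Fin m → ℝ | y ∉ T → x (T, y) = 0} = Set.univ := by
          ext x; simp [hy]
        rw [this]; exact isClosed_univ
      · have : {x : Finset (Fin m) × Fin m → ℝ | y ∉ T → x (T, y) = 0}
            = {x | x (T, y) = 0} := by
          ext x; simp [hy]
        rw [this]
        exact isClosed_eq (continuous_apply _) continuous_const
    have h3 : IsClosed {x : Finset (Fin m) × Fin m → ℝ | ∀ T, ∑ y, x (T, y) = p T} := by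
      rw [Set.setOf_forall]
      apply isClosed_iInter
      intro T
      exact isClosed_eq (continuous_finset_sum _ fun y _ => continuous_apply _) continuous_const
    have : X = {x : Finset (Fin m) × Fin m → ℝ | ∀ i, 0 ≤ x i}
        ∩ ({x | ∀ T y, y ∉ T → x (T, y) = 0} ∩ {x | ∀ T, ∑ y, x (T, y) = p T}) := by
      ext x; simp only [hX, Set.mem_setOf_eq, Set.mem_inter_iff]
    rw [this]
    exact h1.inter (h2.inter h3)
  have hXsub : X ⊆ Set.Icc (fun _ => 0) (fun _ => ∑ T : Finset (Fin m), p T) := by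
    intro x hx'
    rw [Set.mem_Icc]
    constructor
    · intro i; exact hx'.1 i
    · intro i
      calc x i = x (i.1, i.2) := rfl
        _ ≤ ∑ y, x (i.1, y) :=
            Finset.single_le_sum (fun y _ => hx'.1 (i.1, y)) (Finset.mem_univ i.2)
        _ = p i.1 := hx'.2.2 i.1
        _ ≤ ∑ T : Finset (Fin m), p T :=
            Finset.single_le_sum (fun T _ => hp0 T) (Finset.mem_univ i.1)
  have hXcpt : IsCompact X := IsCompact.of_isClosed_subset isCompact_Icc hXclosed hXsub
  have hcolcont : Continuous col :=
    continuous_pi fun y => continuous_finset_sum _ fun T _ => continuous_apply _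
  have hcollin : IsLinearMap ℝ col := by
    constructor
    · intro x y; funext y'; simp [hcol, Finset.sum_add_distrib]
    · intro c x; funext y'; simp [hcol, Finset.mul_sum]
  set F : Set (Fin m → ℝ) := col '' X with hF
  have hFconv : Convex ℝ F := hXconv.is_linear_image hcollin
  have hFclosed : IsClosed F := (hXcpt.image hcolcont).isClosed
  have hqF : q ∈ F := by
    by_contra hq
    obtain ⟨f, u, hfq, hfF⟩ := geometric_hahn_banach_point_closed hFconv hFclosed hq
    set β : Fin m → ℝ := fun y => -(f fun j => if y = j then 1 else 0) with hβ
    have hfv : ∀ v : Fin m → ℝ, ∑ y, v y * β y = -(f v) := by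
      intro v
      have hlin := LinearMap.pi_apply_eq_sum_univ (f.toLinearMap) v
      simp only [ContinuousLinearMap.coe_coe, smul_eq_mul] at hlin
      rw [hβ]
      simp only [mul_neg]
      rw [Finset.sum_neg_distrib, hlin]
    obtain ⟨x, hxmem, hxval⟩ := hgreedy β
    have h1 : u < f (col x) := hfF (col x) ⟨x, hxmem, rfl⟩
    have h2 : ∑ y, q y * β y ≤ ∑ T : Finset (Fin m), p T * val β T := hsep β
    rw [hfv q] at h2
    rw [← hxval, hfv (col x)] at h2
    linarith
  obtain ⟨x, hxmem, hxcol⟩ := hqF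
  refine ⟨x, hxmem.1, hxmem.2.1, hxmem.2.2, ?_⟩
  intro y
  rw [← congrFun hxcol y]


lemma coupling_exists (P : Measure (Fin m → ℝ)) [IsProbabilityMeasure P] (δ q : Fin m → ℝ)
    (x : Finset (Fin m) × Fin m → ℝ) (hx0 : ∀ i, 0 ≤ x i)
    (hxsupp : ∀ T y, y ∉ T → x (T, y) = 0)
    (hxrow : ∀ T, ∑ y, x (T, y) = (P (atomSet δ T)).toReal)
    (hxcol : ∀ y, ∑ T : Finset (Fin m), x (T, y) = q y) :
    ∃ π : Measure ((Fin m → ℝ) × Fin m),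
      IsProbabilityMeasure π ∧ π.map Prod.fst = P ∧
      (∀ y, π.map Prod.snd {y} = ENNReal.ofReal (q y)) ∧
      (∀ᵐ z ∂π, ∀ y' : Fin m, δ y' + z.1 y' ≤ δ z.2 + z.1 z.2) := by
  classical
  set pr : Finset (Fin m) → ℝ := fun T => (P (atomSet δ T)).toReal with hpr
  have hPatom : ∀ T, P (atomSet δ T) = ENNReal.ofReal (pr T) := fun T =>
    (ENNReal.ofReal_toReal (measure_ne_top P _)).symm
  have hpr0 : ∀ T, 0 ≤ pr T := fun T => ENNReal.toReal_nonneg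
  -- if pr T = 0 then all x (T, y) = 0
  have hxzero : ∀ T, pr T = 0 → ∀ y, x (T, y) = 0 := by
    intro T hT y
    have h := (Finset.sum_eq_zero_iff_of_nonneg (fun y' _ => hx0 (T, y'))).1
      ((hxrow T).trans hT) y (Finset.mem_univ y)
    exact h
  set π : Measure ((Fin m → ℝ) × Fin m) :=
    ∑ i : Finset (Fin m) × Fin m, (ENNReal.ofReal (x i / pr i.1)) •
      ((P.restrict (atomSet δ i.1)).map (fun e => (e, i.2))) with hπ
  have hmk : ∀ y : Fin m, Measurable (fun e : Fin m → ℝ => (e, y)) := fun y =>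
    measurable_id.prodMk measurable_const
  have hπapply : ∀ s : Set ((Fin m → ℝ) × Fin m), MeasurableSet s →
      π s = ∑ i : Finset (Fin m) × Fin m,
        (ENNReal.ofReal (x i / pr i.1)) * P ((fun e => (e, i.2)) ⁻¹' s ∩ atomSet δ i.1) := by
    intro s hs
    rw [hπ, Measure.finset_sum_apply]
    apply Finset.sum_congr rfl
    intro i _
    rw [Measure.smul_apply, Measure.map_apply (hmk i.2) hs,
      Measure.restrict_apply (hs.preimage (hmk i.2))]
    rfl
  -- partition of a measurable set
  have hpart : ∀ s : Set (Fin m → ℝ), MeasurableSet s →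
      ∑ T : Finset (Fin m), P (s ∩ atomSet δ T) = P s := by
    intro s hs
    rw [← measure_biUnion_finset ((atom_pairwise_disjoint δ).mono
        (fun T => Set.inter_subset_right)) (fun T _ => hs.inter (measurableSet_atomSet δ T))]
    congr 1
    ext e
    simp only [Set.mem_iUnion, Set.mem_inter_iff]
    constructor
    · rintro ⟨T, _, he, _⟩; exact he
    · intro he; exact ⟨Arg δ e, Finset.mem_univ _, he, rfl⟩
  -- first marginal
  have hfst : π.map Prod.fst = P := by
    apply Measure.ext
    intro s hs
    rw [Measure.map_apply measurable_fst hs, hπapply _ (measurable_fst hs)]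
    have hpre : ∀ i : Finset (Fin m) × Fin m,
        ((fun e => (e, i.2)) ⁻¹' (Prod.fst ⁻¹' s)) = s := fun i => rfl
    calc ∑ i : Finset (Fin m) × Fin m,
          (ENNReal.ofReal (x i / pr i.1)) * P ((fun e => (e, i.2)) ⁻¹' (Prod.fst ⁻¹' s) ∩ atomSet δ i.1)
        = ∑ T : Finset (Fin m), ∑ y : Fin m,
            (ENNReal.ofReal (x (T, y) / pr T)) * P (s ∩ atomSet δ T) := by
          rw [← Finset.sum_product']
          apply Finset.sum_congr rfl
          intro i _
          rw [hpre i]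
      _ = ∑ T : Finset (Fin m), P (s ∩ atomSet δ T) := by
          apply Finset.sum_congr rfl
          intro T _
          rw [← Finset.sum_mul]
          by_cases hT : pr T = 0
          · have hnull : P (s ∩ atomSet δ T) = 0 := by
              apply measure_mono_null Set.inter_subset_right
              rw [hPatom T, hT, ENNReal.ofReal_zero]
            rw [hnull, mul_zero]
          · have : ∑ y : Fin m, ENNReal.ofReal (x (T, y) / pr T) = 1 := by
              rw [← ENNReal.ofReal_sum_of_nonneg (fun y _ => div_nonneg (hx0 (T, y)) (hpr0 T))]
              rw [← Finset.sum_div, hxrow T]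
              have hrfl : (P (atomSet δ T)).toReal = pr T := rfl
              rw [hrfl, div_self hT, ENNReal.ofReal_one]
            rw [this, one_mul]
      _ = P s := hpart s hs
  -- total mass
  have hprob : IsProbabilityMeasure π := by
    constructor
    have h := congrArg (fun μ : Measure (Fin m → ℝ) => μ Set.univ) hfst
    rw [Measure.map_apply measurable_fst MeasurableSet.univ, Set.preimage_univ] at h
    rw [h]
    exact measure_univ
  -- second marginal
  have hsnd : ∀ y : Fin m, π.map Prod.snd {y} = ENNReal.ofReal (q y) := by
    intro y
    rw [Measure.map_apply measurable_snd (measurableSet_singleton y),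
      hπapply _ (measurable_snd (measurableSet_singleton y))]
    have hterm : ∀ i : Finset (Fin m) × Fin m,
        (ENNReal.ofReal (x i / pr i.1)) * P ((fun e => (e, i.2)) ⁻¹' (Prod.snd ⁻¹' {y}) ∩ atomSet δ i.1)
          = if i.2 = y then ENNReal.ofReal (x (i.1, i.2)) else 0 := by
      intro i
      by_cases hiy : i.2 = y
      · rw [if_pos hiy]
        have hpre : ((fun e : Fin m → ℝ => (e, i.2)) ⁻¹' (Prod.snd ⁻¹' {y}))
            = (Set.univ : Set (Fin m → ℝ)) := by
          ext e; simp [hiy]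
        rw [hpre, Set.univ_inter, hPatom i.1]
        by_cases hT : pr i.1 = 0
        · rw [hT, ENNReal.ofReal_zero, mul_zero, hxzero i.1 hT i.2, ENNReal.ofReal_zero]
        · rw [← ENNReal.ofReal_mul (div_nonneg (hx0 i) (hpr0 i.1)),
            div_mul_cancel₀ _ hT]
      · rw [if_neg hiy]
        have hpre : ((fun e : Fin m → ℝ => (e, i.2)) ⁻¹' (Prod.snd ⁻¹' {y}))
            = (∅ : Set (Fin m → ℝ)) := by
          ext e; simp [hiy]
        rw [hpre, Set.empty_inter, measure_empty, mul_zero]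
    rw [Finset.sum_congr rfl (fun i _ => hterm i)]
    rw [Fintype.sum_prod_type]
    have hcollapse : ∀ T : Finset (Fin m),
        (∑ y' : Fin m, if y' = y then ENNReal.ofReal (x (T, y')) else 0)
          = ENNReal.ofReal (x (T, y)) := by
      intro T
      rw [Finset.sum_ite_eq' Finset.univ y (fun y' => ENNReal.ofReal (x (T, y')))]
      rw [if_pos (Finset.mem_univ y)]
    rw [Finset.sum_congr rfl (fun T _ => hcollapse T)]
    rw [← ENNReal.ofReal_sum_of_nonneg (fun T _ => hx0 (T, y)), hxcol y]
  -- almost sure argmax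
  have hae : ∀ᵐ z ∂π, ∀ y' : Fin m, δ y' + z.1 y' ≤ δ z.2 + z.1 z.2 := by
    rw [ae_iff]
    have hbad : {z : (Fin m → ℝ) × Fin m | ¬ ∀ y' : Fin m, δ y' + z.1 y' ≤ δ z.2 + z.1 z.2}
        = ⋃ y : Fin m, ((Csel δ y)ᶜ ×ˢ ({y} : Set (Fin m))) := by
      ext z
      simp only [Set.mem_setOf_eq, Set.mem_iUnion, Set.mem_prod, Set.mem_compl_iff,
        Set.mem_singleton_iff]
      constructor
      · intro h
        exact ⟨z.2, fun hc => h (fun y' => hc y'), rfl⟩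
      · rintro ⟨y, hy, hz2⟩ hall
        exact hy (fun y' => hz2 ▸ hall y')
    rw [hbad]
    have hbadmeas : MeasurableSet (⋃ y : Fin m, ((Csel δ y)ᶜ ×ˢ ({y} : Set (Fin m)))) :=
      MeasurableSet.iUnion fun y =>
        ((measurableSet_Csel δ y).compl).prod (measurableSet_singleton y)
    rw [hπapply _ hbadmeas]
    apply Finset.sum_eq_zero
    intro i _
    by_cases hxi : x i = 0
    · rw [hxi, zero_div, ENNReal.ofReal_zero, zero_mul]
    · have hiT : i.2 ∈ i.1 := by
        by_contra hc
        exact hxi (hxsupp i.1 i.2 hc)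
      have hpre : ((fun e => (e, i.2)) ⁻¹' (⋃ y : Fin m, ((Csel δ y)ᶜ ×ˢ ({y} : Set (Fin m)))))
          = (Csel δ i.2)ᶜ := by
        ext e
        simp only [Set.mem_preimage, Set.mem_iUnion, Set.mem_prod, Set.mem_compl_iff,
          Set.mem_singleton_iff]
        constructor
        · rintro ⟨y, hy, hyeq⟩
          rw [← hyeq] at hy
          exact hy
        · intro h
          exact ⟨i.2, h, rfl⟩
      rw [hpre]
      have hsub : atomSet δ i.1 ⊆ Csel δ i.2 := by
        intro e he
        exact mem_Csel_iff.2 (by rw [(he : Arg δ e = i.1)]; exact hiT)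
      have : (Csel δ i.2)ᶜ ∩ atomSet δ i.1 = ∅ := by
        ext e
        simp only [Set.mem_inter_iff, Set.mem_compl_iff, Set.mem_empty_iff_false, iff_false,
          not_and]
        intro hc he
        exact hc (hsub he)
      rw [this, measure_empty, mul_zero]
  exact ⟨π, hprob, hfst, hsnd, hae⟩


lemma measurable_eval : Measurable (fun z : (Fin m → ℝ) × Fin m => z.1 z.2) := by
  have h : (fun z : (Fin m → ℝ) × Fin m => z.1 z.2)
      = fun z => ∑ y, if z.2 = y then z.1 y else 0 := by
    funext z
    rw [Finset.sum_ite_eq Finset.univ z.2 (fun y => z.1 y), if_pos (Finset.mem_univ _)]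
  rw [h]
  apply Finset.measurable_sum
  intro y _
  apply Measurable.ite
  · exact measurable_snd (measurableSet_singleton y)
  · exact (measurable_pi_apply y).comp measurable_fst
  · exact measurable_const

lemma measurable_comp_snd (c : Fin m → ℝ) :
    Measurable (fun z : (Fin m → ℝ) × Fin m => c z.2) :=
  (measurable_from_top (f := c)).comp measurable_snd

lemma forward_ineq (P : Measure (Fin m → ℝ)) [IsProbabilityMeasure P]
    (hint : Integrable (fun e => ⨆ y, |e y|) P)
    (q : Fin m → ℝ) (hq0 : ∀ y, 0 ≤ q y) (δ : Fin m → ℝ)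
    (π : Measure ((Fin m → ℝ) × Fin m)) (hπprob : IsProbabilityMeasure π)
    (hfst : π.map Prod.fst = P)
    (hsnd : ∀ y, π.map Prod.snd {y} = ENNReal.ofReal (q y))
    (hae : ∀ᵐ z ∂π, ∀ y' : Fin m, δ y' + z.1 y' ≤ δ z.2 + z.1 z.2)
    (δ' : Fin m → ℝ) :
    (∫ e, msup (fun y => δ y + e y) ∂P) + ∑ y, q y * (δ' y - δ y)
      ≤ ∫ e, msup (fun y => δ' y + e y) ∂P := by
  have hintmsup : Integrable (fun e => msup (fun y => |e y|)) P := by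
    simpa only [iSup_eq_msup] using hint
  -- transfer integrals to π
  have htrans : ∀ c : Fin m → ℝ,
      ∫ e, msup (fun y => c y + e y) ∂P = ∫ z, msup (fun y => c y + z.1 y) ∂π := by
    intro c
    rw [← hfst, integral_map measurable_fst.aemeasurable]
    exact (continuous_msup_comp _ (fun y => continuous_const.add (continuous_apply y))).aestronglyMeasurable
  -- integrability on π side
  have hπint : ∀ c : Fin m → ℝ, Integrable (fun z => msup (fun y => c y + z.1 y)) π := by
    intro c
    have hImg : Integrable (fun e => msup (fun y => c y + e y)) (π.map Prod.fst) := by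
      rw [hfst]; exact integrable_msup_add P hint c
    exact (integrable_map_measure
      ((continuous_msup_comp (fun y (e : Fin m → ℝ) => c y + e y)
        (fun y => continuous_const.add (continuous_apply y))).aestronglyMeasurable)
      measurable_fst.aemeasurable).1 hImg
  have habs : Integrable (fun z : (Fin m → ℝ) × Fin m => msup (fun y => |z.1 y|)) π := by
    have hImg : Integrable (fun e => msup (fun y => |e y|)) (π.map Prod.fst) := by
      rw [hfst]; exact hintmsup
    exact (integrable_map_measure
      ((continuous_msup_comp (fun y (e : Fin m → ℝ) => |e y|)
        (fun y => (continuous_apply y).abs)).aestronglyMeasurable)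
      measurable_fst.aemeasurable).1 hImg
  have heval : ∀ c : Fin m → ℝ, Integrable (fun z : (Fin m → ℝ) × Fin m => c z.2 + z.1 z.2) π := by
    intro c
    apply Integrable.mono' ((integrable_const (msup (fun y => |c y|))).add habs)
    · exact ((measurable_comp_snd c).add measurable_eval).aestronglyMeasurable
    · filter_upwards with z
      rw [Real.norm_eq_abs]
      calc |c z.2 + z.1 z.2| ≤ |c z.2| + |z.1 z.2| := abs_add_le _ _
        _ ≤ msup (fun y => |c y|) + msup (fun y => |z.1 y|) :=
            add_le_add (abs_le_msup_abs c z.2) (abs_le_msup_abs z.1 z.2)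
  have hsub : Integrable (fun z : (Fin m → ℝ) × Fin m => δ' z.2 - δ z.2) π := by
    apply Integrable.mono' (integrable_const (msup (fun y => |δ' y - δ y|)))
    · exact ((measurable_comp_snd δ').sub (measurable_comp_snd δ)).aestronglyMeasurable
    · filter_upwards with z
      rw [Real.norm_eq_abs]
      exact abs_le_msup_abs (fun y => δ' y - δ y) z.2
  -- main chain
  have step1 : ∫ z, (δ' z.2 + z.1 z.2) ∂π ≤ ∫ z, msup (fun y => δ' y + z.1 y) ∂π := by
    apply integral_mono (heval δ') (hπint δ')
    intro z
    exact le_msup (fun y => δ' y + z.1 y) z.2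
  have step2 : ∫ z, (δ z.2 + z.1 z.2) ∂π = ∫ z, msup (fun y => δ y + z.1 y) ∂π := by
    apply integral_congr_ae
    filter_upwards [hae] with z hz
    exact le_antisymm (le_msup (fun y => δ y + z.1 y) z.2) (msup_le hz)
  have step3 : ∫ z, (δ' z.2 + z.1 z.2) ∂π
      = (∫ z, (δ z.2 + z.1 z.2) ∂π) + ∫ z, (δ' z.2 - δ z.2) ∂π := by
    rw [← integral_add (heval δ) hsub]
    apply integral_congr_ae
    filter_upwards with z
    ring
  have step4 : ∫ z, (δ' z.2 - δ z.2) ∂π = ∑ y, q y * (δ' y - δ y) := by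
    have hmap : ∫ z, (δ' z.2 - δ z.2) ∂π = ∫ y, (δ' y - δ y) ∂(π.map Prod.snd) := by
      rw [integral_map measurable_snd.aemeasurable
        (measurable_from_top (f := fun y => δ' y - δ y)).aestronglyMeasurable]
    rw [hmap]
    haveI : IsProbabilityMeasure (π.map Prod.snd) :=
      Measure.isProbabilityMeasure_map measurable_snd.aemeasurable
    rw [integral_fintype _]
    apply Finset.sum_congr rfl
    intro y _
    rw [Measure.real, hsnd y, ENNReal.toReal_ofReal (hq0 y), smul_eq_mul]
    exact Integrable.of_finite
  rw [htrans δ, htrans δ', ← step2, ← step4, ← step3]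
  exact step1

lemma convexG (P : Measure (Fin m → ℝ)) [IsProbabilityMeasure P]
    (hint : Integrable (fun e => ⨆ y, |e y|) P) :
    ConvexOn ℝ Set.univ (fun δ : Fin m → ℝ => ∫ e, (⨆ y, (δ y + e y)) ∂P) := by
  refine ⟨convex_univ, ?_⟩
  intro δ1 _ δ2 _ a b ha hb hab
  simp only [smul_eq_mul]
  have h1 : ∀ δc : Fin m → ℝ, (∫ e, (⨆ y, (δc y + e y)) ∂P)
      = ∫ e, msup (fun y => δc y + e y) ∂P := by
    intro δc
    apply integral_congr_ae
    filter_upwards with e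
    exact iSup_eq_msup _
  rw [h1, h1, h1]
  have hpt : ∀ e : Fin m → ℝ, msup (fun y => (a • δ1 + b • δ2) y + e y)
      ≤ a * msup (fun y => δ1 y + e y) + b * msup (fun y => δ2 y + e y) := by
    intro e
    apply msup_le
    intro y
    have h1' : δ1 y + e y ≤ msup (fun y => δ1 y + e y) := le_msup (fun y => δ1 y + e y) y
    have h2' : δ2 y + e y ≤ msup (fun y => δ2 y + e y) := le_msup (fun y => δ2 y + e y) y
    have hx : (a • δ1 + b • δ2) y + e y = a * (δ1 y + e y) + b * (δ2 y + e y) := by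
      simp only [Pi.add_apply, Pi.smul_apply, smul_eq_mul]
      have h2 : a * (δ1 y + e y) + b * (δ2 y + e y) = a * δ1 y + b * δ2 y + (a + b) * e y := by
        ring
      rw [h2, hab, one_mul]
    rw [hx]
    nlinarith
  calc ∫ e, msup (fun y => (a • δ1 + b • δ2) y + e y) ∂P
      ≤ ∫ e, (a * msup (fun y => δ1 y + e y) + b * msup (fun y => δ2 y + e y)) ∂P := by
        apply integral_mono (integrable_msup_add P hint _)
        · exact ((integrable_msup_add P hint δ1).const_mul a).add
            ((integrable_msup_add P hint δ2).const_mul b)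
        · exact hpt
    _ = a * (∫ e, msup (fun y => δ1 y + e y) ∂P) + b * ∫ e, msup (fun y => δ2 y + e y) ∂P := by
        rw [integral_add ((integrable_msup_add P hint δ1).const_mul a)
          ((integrable_msup_add P hint δ2).const_mul b), integral_const_mul, integral_const_mul]



lemma atomSet_empty (δ : Fin m → ℝ) : atomSet δ (∅ : Finset (Fin m)) = ∅ := by
  ext e
  simp only [atomSet, Set.mem_setOf_eq, Set.mem_empty_iff_false, iff_false]
  intro h
  exact Finset.nonempty_iff_ne_empty.1 (Arg_nonempty δ e) h

end DemandInv


/-- Demand inversion as a subgradient relation: with `𝒴 = Fin m` a finite set of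
alternatives, `ε ∼ P` a random vector in `ℝ^𝒴` with `E[max_y |ε_y|] < ∞`, and
`G(δ) = E[max_y {δ_y + ε_y}]`, the map `G` is convex, and a probability vector `q` is a
vector of market shares induced by `δ` (i.e. some `Y ∼ q`, defined jointly with `ε`,
satisfies `Y ∈ argmax_y {δ_y + ε_y}` a.s.) if and only if `q` is a subgradient of `G`
at `δ`. -/
theorem demand_inversion_subgradient
    (m : ℕ) [NeZero m]
    (P : Measure (Fin m → ℝ)) [IsProbabilityMeasure P]
    (hint : Integrable (fun e => ⨆ y, |e y|) P)
    (G : (Fin m → ℝ) → ℝ)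
    (hG : G = fun δ => ∫ e, (⨆ y, (δ y + e y)) ∂P)
    (q : Fin m → ℝ) (hq0 : ∀ y, 0 ≤ q y) (hq1 : ∑ y, q y = 1)
    (δ : Fin m → ℝ) :
    ConvexOn ℝ Set.univ G ∧
    ((∃ π : Measure ((Fin m → ℝ) × Fin m),
        IsProbabilityMeasure π ∧
        -- the first margin of the joint law of (ε, Y) is the law P of ε ...
        π.map Prod.fst = P ∧
        -- ... the law of Y is q ...
        (∀ y, π.map Prod.snd {y} = ENNReal.ofReal (q y)) ∧
        -- ... and Y ∈ argmax_y {δ_y + ε_y} almost surely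
        (∀ᵐ z ∂π, ∀ y' : Fin m, δ y' + z.1 y' ≤ δ z.2 + z.1 z.2)) ↔
      -- q is a subgradient of G at δ
      (∀ δ' : Fin m → ℝ, G δ + ∑ y, q y * (δ' y - δ y) ≤ G δ')) := by
  have hGmsup : ∀ δc : Fin m → ℝ, G δc = ∫ e, DemandInv.msup (fun y => δc y + e y) ∂P := by
    intro δc
    rw [hG]
    exact integral_congr_ae (Filter.Eventually.of_forall (fun e => DemandInv.iSup_eq_msup _))
  refine ⟨by rw [hG]; exact DemandInv.convexG P hint, ?_, ?_⟩
  · rintro ⟨π, hπprob, hfst, hsnd, hae⟩ δ'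
    rw [hGmsup δ, hGmsup δ']
    exact DemandInv.forward_ineq P hint q hq0 δ π hπprob hfst hsnd hae δ'
  · intro hsub
    set p : Finset (Fin m) → ℝ := fun T => (P (DemandInv.atomSet δ T)).toReal with hp
    have hsep : ∀ β : Fin m → ℝ, ∑ y, q y * β y
        ≤ ∑ T : Finset (Fin m), p T * DemandInv.val β T := by
      intro β
      have htend := DemandInv.tendsto_quotient P hint δ β
      have hbound : ∀ n : ℕ, ∑ y, q y * β y ≤
          ((∫ e, DemandInv.msup (fun y => δ y + (1 / ((n:ℝ)+1)) * β y + e y) ∂P)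
            - ∫ e, DemandInv.msup (fun y => δ y + e y) ∂P) / (1 / ((n:ℝ)+1)) := by
        intro n
        set a : ℝ := 1 / ((n:ℝ)+1) with ha
        have ha0 : 0 < a := by positivity
        have h := hsub (fun y => δ y + a * β y)
        rw [hGmsup δ, hGmsup (fun y => δ y + a * β y)] at h
        have hδ' : (∫ e, DemandInv.msup (fun y => (fun y => δ y + a * β y) y + e y) ∂P)
            = ∫ e, DemandInv.msup (fun y => δ y + a * β y + e y) ∂P := rfl
        rw [hδ'] at h
        have hsum : ∑ y, q y * ((fun y => δ y + a * β y) y - δ y)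
            = a * ∑ y, q y * β y := by
          rw [Finset.mul_sum]
          apply Finset.sum_congr rfl
          intro y _
          ring
        rw [hsum] at h
        rw [le_div_iff₀ ha0]
        linarith
      have hlim := ge_of_tendsto' htend hbound
      calc ∑ y, q y * β y
          ≤ ∫ e, DemandInv.phi δ β e ∂P := hlim
        _ = ∑ T : Finset (Fin m), DemandInv.val β T * (P (DemandInv.atomSet δ T)).toReal :=
            DemandInv.integral_phi δ β P
        _ = ∑ T : Finset (Fin m), p T * DemandInv.val β T := by
            apply Finset.sum_congr rfl
            intro T _
            rw [mul_comm]
    have hp0 : ∀ T, 0 ≤ p T := fun T => ENNReal.toReal_nonneg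
    have hpe : p ∅ = 0 := by
      rw [hp]
      simp only
      rw [DemandInv.atomSet_empty δ, measure_empty, ENNReal.toReal_zero]
    obtain ⟨x, hx0, hxsupp, hxrow, hxcol⟩ := DemandInv.flow_exists p hp0 hpe q hsep
    exact DemandInv.coupling_exists P δ q x hx0 hxsupp hxrow hxcol
end

section
/- Demand inversion as an optimal transport dual problem: let 𝒴 be a finite set, ε a random vector in ℝ^𝒴 with E[max_{y} |ε_y|] < ∞, G(δ) = E[max_{y ∈ 𝒴} {δ_y + ε_y}], and q a probability vector on 𝒴. Then δ ∈ ℝ^𝒴 belongs to D(q) if and only if ψ := −δ minimizes the function ψ ↦ E[max_{y ∈ 𝒴} {ε_y − ψ_y}] + Σ_{y ∈ 𝒴} q_y ψ_y over ℝ^𝒴; equivalently, D(q) is the set of minimizers of δ ↦ G(δ) − Σ_{y ∈ 𝒴} q_y δ_y over ℝ^𝒴. -/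
set_option linter.unusedSectionVars false

open MeasureTheory Finset

namespace DemandDual

variable {m : ℕ} [NeZero m]

instance : Nonempty (Fin m) := ⟨⟨0, Nat.pos_of_ne_zero (NeZero.ne m)⟩⟩

noncomputable def msup (f : Fin m → ℝ) : ℝ := Finset.univ.sup' Finset.univ_nonempty f

lemma le_msup (f : Fin m → ℝ) (y : Fin m) : f y ≤ msup f := Finset.le_sup' f (mem_univ y)

lemma msup_le {f : Fin m → ℝ} {b : ℝ} (h : ∀ y, f y ≤ b) : msup f ≤ b :=
  Finset.sup'_le _ _ fun y _ => h y

lemma msup_eq_ciSup (f : Fin m → ℝ) : msup f = ⨆ y, f y := Finset.sup'_univ_eq_ciSup f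

lemma exists_msup (f : Fin m → ℝ) : ∃ y, msup f = f y := by
  obtain ⟨y, _, hy⟩ := Finset.exists_mem_eq_sup' (univ_nonempty (α := Fin m)) f
  exact ⟨y, hy⟩

lemma abs_msup_sub_le (a b : Fin m → ℝ) :
    |msup a - msup b| ≤ msup (fun y => |a y - b y|) := by
  rw [abs_sub_le_iff]
  constructor
  · have : msup a ≤ msup b + msup (fun y => |a y - b y|) := by
      refine msup_le fun y => ?_
      have := le_msup b y
      have := le_msup (fun y => |a y - b y|) y
      have : a y - b y ≤ |a y - b y| := le_abs_self _
      linarith [le_msup b y, le_msup (fun y => |a y - b y|) y]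
    linarith
  · have : msup b ≤ msup a + msup (fun y => |a y - b y|) := by
      refine msup_le fun y => ?_
      have : b y - a y ≤ |a y - b y| := by
        rw [abs_sub_comm]; exact le_abs_self _
      linarith [le_msup a y, le_msup (fun y => |a y - b y|) y]
    linarith

lemma continuous_msup_affine (a : Fin m → ℝ) :
    Continuous fun e : Fin m → ℝ => msup (fun y => a y + e y) := by
  apply Continuous.finset_sup'_apply
  intro y _
  exact continuous_const.add (continuous_apply y)

lemma integrable_msup_affine (P : Measure (Fin m → ℝ)) [IsProbabilityMeasure P]
    (hint : Integrable (fun e => msup (fun y => |e y|)) P) (a : Fin m → ℝ) :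
    Integrable (fun e => msup (fun y => a y + e y)) P := by
  refine Integrable.mono' (g := fun e => msup (fun y => |a y|) + msup (fun y => |e y|))
    ((integrable_const _).add hint) ((continuous_msup_affine a).aestronglyMeasurable) ?_
  refine Filter.Eventually.of_forall fun e => ?_
  simp only [Real.norm_eq_abs]
  rw [abs_le]
  constructor
  · obtain ⟨y, hy⟩ := exists_msup (fun y => a y + e y)
    have h1 := le_msup (fun y => |a y|) y
    have h2 := le_msup (fun y => |e y|) y
    have := abs_le.1 (le_refl |a y|)
    have ha := neg_abs_le (a y)
    have he := neg_abs_le (e y)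
    rw [hy]; linarith
  · refine msup_le fun y => ?_
    have h1 := le_msup (fun y => |a y|) y
    have h2 := le_msup (fun y => |e y|) y
    have ha := le_abs_self (a y)
    have he := le_abs_self (e y)
    linarith


noncomputable def Amax (δ e : Fin m → ℝ) : Finset (Fin m) :=
  letI := Classical.decPred fun y : Fin m => ∀ y', δ y' + e y' ≤ δ y + e y
  Finset.univ.filter fun y => ∀ y', δ y' + e y' ≤ δ y + e y

lemma mem_Amax {δ e : Fin m → ℝ} {y : Fin m} :
    y ∈ Amax δ e ↔ ∀ y', δ y' + e y' ≤ δ y + e y := by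
  simp [Amax]

lemma Amax_nonempty (δ e : Fin m → ℝ) : (Amax δ e).Nonempty := by
  obtain ⟨y, hy⟩ := exists_msup (fun y => δ y + e y)
  exact ⟨y, mem_Amax.2 fun y' => hy ▸ le_msup (fun y => δ y + e y) y'⟩

def Aset (δ : Fin m → ℝ) (T : Finset (Fin m)) : Set (Fin m → ℝ) := {e | Amax δ e = T}

lemma Aset_empty (δ : Fin m → ℝ) : Aset δ ∅ = ∅ := by
  ext e
  simp only [Aset, Set.mem_setOf_eq, Set.mem_empty_iff_false, iff_false]
  intro h
  exact Finset.not_nonempty_empty (h ▸ Amax_nonempty δ e)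

lemma measurableSet_Aset (δ : Fin m → ℝ) (T : Finset (Fin m)) :
    MeasurableSet (Aset δ T) := by
  have hS : ∀ y : Fin m, MeasurableSet {e : Fin m → ℝ | ∀ y', δ y' + e y' ≤ δ y + e y} := by
    intro y
    have : {e : Fin m → ℝ | ∀ y', δ y' + e y' ≤ δ y + e y} =
        ⋂ y', {e : Fin m → ℝ | δ y' + e y' ≤ δ y + e y} := by
      ext e; simp
    rw [this]
    exact MeasurableSet.iInter fun y' =>
      measurableSet_le (measurable_const.add (measurable_pi_apply y'))
        (measurable_const.add (measurable_pi_apply y))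
  have : Aset δ T = ⋂ y : Fin m, {e : Fin m → ℝ | y ∈ Amax δ e ↔ y ∈ T} := by
    ext e
    simp only [Aset, Set.mem_setOf_eq, Set.mem_iInter, Finset.ext_iff]
  rw [this]
  refine MeasurableSet.iInter fun y => ?_
  by_cases hy : y ∈ T
  · have : {e : Fin m → ℝ | y ∈ Amax δ e ↔ y ∈ T} =
        {e : Fin m → ℝ | ∀ y', δ y' + e y' ≤ δ y + e y} := by
      ext e; simp [hy, mem_Amax]
    rw [this]; exact hS y
  · have : {e : Fin m → ℝ | y ∈ Amax δ e ↔ y ∈ T} =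
        {e : Fin m → ℝ | ∀ y', δ y' + e y' ≤ δ y + e y}ᶜ := by
      ext e; simp [hy, mem_Amax]
    rw [this]; exact (hS y).compl

lemma sum_measure_inter_Aset (P : Measure (Fin m → ℝ)) (δ : Fin m → ℝ)
    {s : Set (Fin m → ℝ)} (hs : MeasurableSet s) :
    ∑ T : Finset (Fin m), P (s ∩ Aset δ T) = P s := by
  have hdisj : (↑(Finset.univ : Finset (Finset (Fin m))) : Set (Finset (Fin m))).PairwiseDisjoint
      fun T => s ∩ Aset δ T := by
    intro T _ T' _ hTT'
    refine Set.disjoint_left.2 fun e he he' => hTT' ?_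
    have h1 : Amax δ e = T := he.2
    have h2 : Amax δ e = T' := he'.2
    rw [← h1, h2]
  have hcover : ⋃ T ∈ (Finset.univ : Finset (Finset (Fin m))), (s ∩ Aset δ T) = s := by
    ext e
    simp only [Set.mem_iUnion, Set.mem_inter_iff, mem_univ, exists_prop, true_and]
    constructor
    · rintro ⟨T, he, _⟩; exact he
    · intro he; exact ⟨Amax δ e, he, rfl⟩
  calc ∑ T : Finset (Fin m), P (s ∩ Aset δ T)
      = P (⋃ T ∈ (Finset.univ : Finset (Finset (Fin m))), (s ∩ Aset δ T)) :=
        (measure_biUnion_finset hdisj fun T _ => hs.inter (measurableSet_Aset δ T)).symm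
    _ = P s := by rw [hcover]


noncomputable def Fint (P : Measure (Fin m → ℝ)) (a : Fin m → ℝ) : ℝ :=
  ∫ e, msup (fun y => a y + e y) ∂P

noncomputable def cmax (h : Fin m → ℝ) (T : Finset (Fin m)) : ℝ :=
  if hT : T.Nonempty then T.sup' hT h else 0

lemma cmax_Amax_eq (h δ e : Fin m → ℝ) :
    cmax h (Amax δ e) = (Amax δ e).sup' (Amax_nonempty δ e) h := by
  rw [cmax, dif_pos]

lemma abs_cmax_le (h : Fin m → ℝ) (T : Finset (Fin m)) :
    |cmax h T| ≤ msup (fun y => |h y|) := by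
  have hC : 0 ≤ msup (fun y => |h y|) := by
    obtain ⟨y⟩ := (inferInstance : Nonempty (Fin m))
    exact le_trans (abs_nonneg (h y)) (le_msup (fun y => |h y|) y)
  rw [cmax]
  split_ifs with hT
  · obtain ⟨y, hy, hval⟩ := Finset.exists_mem_eq_sup' hT h
    rw [hval]
    exact le_trans (le_refl _) (le_msup (fun y => |h y|) y)
  · simpa using hC

/-- The pointwise eventual-linearity of the perturbed max. -/
lemma msup_perturb (δ e h : Fin m → ℝ) :
    ∃ ε > 0, ∀ t : ℝ, 0 < t → t < ε →
      msup (fun y => (δ y + t * h y) + e y) =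
        msup (fun y => δ y + e y) + t * cmax h (Amax δ e) := by
  classical
  set A := Amax δ e with hAdef
  have hA : A.Nonempty := Amax_nonempty δ e
  set M := msup (fun y => δ y + e y) with hM
  set C := msup (fun y => |h y|) with hCdef
  have hC0 : 0 ≤ C := by
    obtain ⟨y⟩ := (inferInstance : Nonempty (Fin m))
    exact le_trans (abs_nonneg (h y)) (le_msup (fun y => |h y|) y)
  have habsC : ∀ y, |h y| ≤ C := fun y => le_msup (fun y => |h y|) y
  obtain ⟨y0, hy0A, hy0⟩ := Finset.exists_mem_eq_sup' hA h
  have hcA : cmax h A = h y0 := by rw [hAdef, cmax_Amax_eq]; exact hy0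
  have hmemM : ∀ y ∈ A, δ y + e y = M := by
    intro y hy
    refine le_antisymm (le_msup (fun y => δ y + e y) y) (msup_le fun y' => (mem_Amax.1 ?_) y')
    exact hy
  set B := (univ : Finset (Fin m)) \ A with hB
  by_cases hBne : B.Nonempty
  · have hBlt : B.sup' hBne (fun y => δ y + e y) < M := by
      rw [Finset.sup'_lt_iff]
      intro y hyB
      have hyA : y ∉ A := (Finset.mem_sdiff.1 hyB).2
      have : ¬ ∀ y', δ y' + e y' ≤ δ y + e y := fun hh => hyA (mem_Amax.2 hh)
      push_neg at this
      obtain ⟨y', hy'⟩ := this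
      exact lt_of_lt_of_le hy' (le_msup (fun y => δ y + e y) y')
    set g := M - B.sup' hBne (fun y => δ y + e y) with hg
    have hgpos : 0 < g := by rw [hg]; exact sub_pos.mpr hBlt
    refine ⟨g / (2*C+1), by positivity, fun t ht htε => ?_⟩
    have hle : ∀ y, (δ y + t * h y) + e y ≤ M + t * cmax h A := by
      intro y
      by_cases hyA : y ∈ A
      · have h1 := hmemM y hyA
        have h2 : h y ≤ cmax h A := by rw [hAdef, cmax_Amax_eq]; exact Finset.le_sup' h hyA
        nlinarith
      · have hyB : y ∈ B := Finset.mem_sdiff.2 ⟨mem_univ y, hyA⟩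
        have h1 : δ y + e y ≤ M - g := by
          have := Finset.le_sup' (fun y => δ y + e y) hyB
          simp only [hg]; linarith
        have h2 : h y ≤ C := le_trans (le_abs_self _) (habsC y)
        have h3 : -C ≤ cmax h A := by
          rw [hcA]; have := habsC y0; cases abs_le.1 this; linarith
        have h4 : t * (2*C+1) < g := by
          have h2C : (0:ℝ) < 2*C+1 := by positivity
          calc t * (2*C+1) < (g/(2*C+1)) * (2*C+1) := by
                exact mul_lt_mul_of_pos_right htε h2C
            _ = g := div_mul_cancel₀ g (ne_of_gt h2C)
        nlinarith
    have hge : M + t * cmax h A ≤ msup (fun y => (δ y + t * h y) + e y) := by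
      have := le_msup (fun y => (δ y + t * h y) + e y) y0
      rw [hcA]
      have := hmemM y0 hy0A
      linarith [le_msup (fun y => (δ y + t * h y) + e y) y0]
    exact le_antisymm (msup_le hle) hge
  · -- A = univ
    have hAuniv : A = univ := by
      have hBempty : B = ∅ := Finset.not_nonempty_iff_eq_empty.1 hBne
      have := Finset.sdiff_eq_empty_iff_subset.1 hBempty
      exact le_antisymm (Finset.subset_univ A) this
    refine ⟨1, one_pos, fun t ht _ => ?_⟩
    have hle : ∀ y, (δ y + t * h y) + e y ≤ M + t * cmax h A := by
      intro y
      have hyA : y ∈ A := hAuniv ▸ mem_univ y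
      have h1 := hmemM y hyA
      have h2 : h y ≤ cmax h A := by rw [hAdef, cmax_Amax_eq]; exact Finset.le_sup' h hyA
      nlinarith
    have hge : M + t * cmax h A ≤ msup (fun y => (δ y + t * h y) + e y) := by
      rw [hcA]
      have h1 := hmemM y0 hy0A
      linarith [le_msup (fun y => (δ y + t * h y) + e y) y0]
    exact le_antisymm (msup_le hle) hge


lemma measurable_cmax_Amax (δ h : Fin m → ℝ) :
    (fun e => cmax h (Amax δ e)) =
      fun e => ∑ T : Finset (Fin m), (Aset δ T).indicator (fun _ => cmax h T) e := by
  funext e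
  rw [Finset.sum_eq_single (Amax δ e)]
  · rw [Set.indicator_of_mem (by exact rfl : e ∈ Aset δ (Amax δ e))]
  · intro T _ hT
    exact Set.indicator_of_notMem (fun hmem => hT (Eq.symm hmem)) _
  · intro hmem
    exact absurd (mem_univ _) hmem

lemma integral_cmax (P : Measure (Fin m → ℝ)) [IsProbabilityMeasure P] (δ h : Fin m → ℝ) :
    ∫ e, cmax h (Amax δ e) ∂P =
      ∑ T : Finset (Fin m), (P (Aset δ T)).toReal * cmax h T := by
  rw [measurable_cmax_Amax δ h, integral_finset_sum]
  · refine Finset.sum_congr rfl fun T _ => ?_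
    rw [integral_indicator_const _ (measurableSet_Aset δ T), smul_eq_mul, measureReal_def]
  · intro T _
    exact (integrable_const (cmax h T)).indicator (measurableSet_Aset δ T)

lemma integrable_cmax_Amax (P : Measure (Fin m → ℝ)) [IsProbabilityMeasure P]
    (δ h : Fin m → ℝ) : Integrable (fun e => cmax h (Amax δ e)) P := by
  rw [measurable_cmax_Amax δ h]
  exact integrable_finset_sum _ fun T _ =>
    (integrable_const (cmax h T)).indicator (measurableSet_Aset δ T)

lemma key_ineq (P : Measure (Fin m → ℝ)) [IsProbabilityMeasure P]
    (hint : Integrable (fun e => msup (fun y => |e y|)) P)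
    (q δ : Fin m → ℝ)
    (hmin : ∀ δ' : Fin m → ℝ,
      Fint P δ - ∑ y, q y * δ y ≤ Fint P δ' - ∑ y, q y * δ' y)
    (h : Fin m → ℝ) :
    ∑ y, q y * h y ≤ ∫ e, cmax h (Amax δ e) ∂P := by
  classical
  set C := msup (fun y => |h y|) with hCdef
  have hC0 : 0 ≤ C := by
    obtain ⟨y⟩ := (inferInstance : Nonempty (Fin m))
    exact le_trans (abs_nonneg (h y)) (le_msup (fun y => |h y|) y)
  set t : ℕ → ℝ := fun n => ((n : ℝ) + 1)⁻¹ with htdef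
  have ht : ∀ n, 0 < t n := fun n => by positivity
  set g : ℕ → (Fin m → ℝ) → ℝ := fun n e =>
    (msup (fun y => (δ y + t n * h y) + e y) - msup (fun y => δ y + e y)) / t n with hgdef
  -- dominated convergence
  have hlim : Filter.Tendsto (fun n => ∫ e, g n e ∂P) Filter.atTop
      (nhds (∫ e, cmax h (Amax δ e) ∂P)) := by
    refine tendsto_integral_of_dominated_convergence (fun _ => C) ?_ (integrable_const C) ?_ ?_
    · intro n
      exact (((continuous_msup_affine (fun y => δ y + t n * h y)).sub
        (continuous_msup_affine δ)).div_const (t n)).aestronglyMeasurable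
    · intro n
      refine Filter.Eventually.of_forall fun e => ?_
      simp only [hgdef, Real.norm_eq_abs, abs_div, abs_of_pos (ht n)]
      rw [div_le_iff₀ (ht n)]
      have h1 : |msup (fun y => (δ y + t n * h y) + e y) - msup (fun y => δ y + e y)| ≤
          msup (fun y => |((δ y + t n * h y) + e y) - (δ y + e y)|) := abs_msup_sub_le _ _
      refine le_trans h1 ?_
      rw [mul_comm]
      refine msup_le fun y => ?_
      have : ((δ y + t n * h y) + e y) - (δ y + e y) = t n * h y := by ring
      rw [this, abs_mul, abs_of_pos (ht n)]
      exact mul_le_mul_of_nonneg_left (le_msup (fun y => |h y|) y) (le_of_lt (ht n))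
    · refine Filter.Eventually.of_forall fun e => ?_
      obtain ⟨ε, hε, hev⟩ := msup_perturb δ e h
      have htend : Filter.Tendsto t Filter.atTop (nhds 0) := by
        simpa [htdef, one_div] using tendsto_one_div_add_atTop_nhds_zero_nat (𝕜 := ℝ)
      have : ∀ᶠ n in Filter.atTop, g n e = cmax h (Amax δ e) := by
        filter_upwards [htend.eventually (gt_mem_nhds hε)] with n hn
        rw [hgdef]
        simp only
        rw [hev (t n) (ht n) hn]
        rw [add_sub_cancel_left, mul_div_cancel_left₀ _ (ht n).ne']
      exact Filter.Tendsto.congr' (this.mono fun n hn => hn.symm) tendsto_const_nhds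
  -- lower bound for each n
  have hlow : ∀ n, ∑ y, q y * h y ≤ ∫ e, g n e ∂P := by
    intro n
    have hFeq : ∫ e, g n e ∂P =
        (Fint P (fun y => δ y + t n * h y) - Fint P δ) / t n := by
      rw [hgdef]
      simp only
      rw [integral_div, integral_sub (integrable_msup_affine P hint _)
        (integrable_msup_affine P hint δ)]
      rfl
    have hm := hmin (fun y => δ y + t n * h y)
    have hsum : ∑ y, q y * (δ y + t n * h y) =
        (∑ y, q y * δ y) + t n * ∑ y, q y * h y := by
      rw [Finset.mul_sum, ← Finset.sum_add_distrib]
      refine Finset.sum_congr rfl fun y _ => by ring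
    rw [hFeq, le_div_iff₀ (ht n)]
    rw [hsum] at hm
    linarith
  exact ge_of_tendsto hlim (Filter.Eventually.of_forall hlow)


lemma exists_weights (p : Finset (Fin m) → ℝ) (hp : ∀ T, 0 ≤ p T)
    (q : Fin m → ℝ)
    (hineq : ∀ h : Fin m → ℝ, ∑ y, q y * h y ≤ ∑ T, p T * cmax h T) :
    ∃ v : Finset (Fin m) → Fin m → ℝ,
      (∀ T y, 0 ≤ v T y) ∧ (∀ T y, y ∉ T → v T y = 0) ∧
      (∀ T : Finset (Fin m), T.Nonempty → ∑ y, v T y = 1) ∧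
      (∀ y, ∑ T, p T * v T y = q y) := by
  classical
  set K : Set (Finset (Fin m) → Fin m → ℝ) :=
    {v | ∀ T, (∀ y, 0 ≤ v T y) ∧ (∀ y, y ∉ T → v T y = 0) ∧
      (T.Nonempty → ∑ y, v T y = 1)} with hKdef
  set φ : (Finset (Fin m) → Fin m → ℝ) →ₗ[ℝ] (Fin m → ℝ) :=
    { toFun := fun v y => ∑ T, p T * v T y
      map_add' := by
        intro v w; funext y
        simp [Pi.add_apply, mul_add, Finset.sum_add_distrib]
      map_smul' := by
        intro c v; funext y
        simp [Finset.mul_sum, mul_comm, mul_left_comm] } with hφdef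
  have hKconv : Convex ℝ K := by
    intro v hv w hw a b ha hb hab
    intro T
    refine ⟨fun y => ?_, fun y hy => ?_, fun hT => ?_⟩
    · have := (hv T).1 y
      have := (hw T).1 y
      simp only [Pi.add_apply, Pi.smul_apply, smul_eq_mul]
      positivity
    · simp only [Pi.add_apply, Pi.smul_apply, smul_eq_mul, (hv T).2.1 y hy, (hw T).2.1 y hy]
      ring
    · simp only [Pi.add_apply, Pi.smul_apply, smul_eq_mul]
      rw [Finset.sum_add_distrib, ← Finset.mul_sum, ← Finset.mul_sum,
        (hv T).2.2 hT, (hw T).2.2 hT]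
      linarith
  have hKclosed : IsClosed K := by
    have h1 : ∀ (T : Finset (Fin m)) (y : Fin m),
        IsClosed {v : Finset (Fin m) → Fin m → ℝ | 0 ≤ v T y} :=
      fun T y => isClosed_le continuous_const ((continuous_apply y).comp (continuous_apply T))
    have h2 : ∀ (T : Finset (Fin m)) (y : Fin m),
        IsClosed {v : Finset (Fin m) → Fin m → ℝ | y ∉ T → v T y = 0} := by
      intro T y
      by_cases hy : y ∈ T
      · have : {v : Finset (Fin m) → Fin m → ℝ | y ∉ T → v T y = 0} = Set.univ := by
          ext v; simp [hy]
        rw [this]; exact isClosed_univ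
      · have : {v : Finset (Fin m) → Fin m → ℝ | y ∉ T → v T y = 0} =
            {v | v T y = 0} := by ext v; simp [hy]
        rw [this]
        exact isClosed_eq ((continuous_apply y).comp (continuous_apply T)) continuous_const
    have h3 : ∀ (T : Finset (Fin m)),
        IsClosed {v : Finset (Fin m) → Fin m → ℝ | T.Nonempty → ∑ y, v T y = 1} := by
      intro T
      by_cases hT : T.Nonempty
      · have : {v : Finset (Fin m) → Fin m → ℝ | T.Nonempty → ∑ y, v T y = 1} =
            {v | ∑ y, v T y = 1} := by ext v; simp [hT]
        rw [this]
        exact isClosed_eq (continuous_finset_sum _ fun y _ =>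
          (continuous_apply y).comp (continuous_apply T)) continuous_const
      · have : {v : Finset (Fin m) → Fin m → ℝ | T.Nonempty → ∑ y, v T y = 1} =
            Set.univ := by ext v; simp [hT]
        rw [this]; exact isClosed_univ
    have : K = (⋂ T, ⋂ y, {v : Finset (Fin m) → Fin m → ℝ | 0 ≤ v T y}) ∩
        ((⋂ T, ⋂ y, {v : Finset (Fin m) → Fin m → ℝ | y ∉ T → v T y = 0}) ∩
          (⋂ T, {v : Finset (Fin m) → Fin m → ℝ | T.Nonempty → ∑ y, v T y = 1})) := by
      ext v
      simp only [hKdef, Set.mem_setOf_eq, Set.mem_inter_iff, Set.mem_iInter]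
      constructor
      · intro h
        exact ⟨fun T y => (h T).1 y, fun T y => (h T).2.1 y, fun T => (h T).2.2⟩
      · rintro ⟨ha, hb, hc⟩ T
        exact ⟨ha T, hb T, hc T⟩
    rw [this]
    exact ((isClosed_iInter fun T => isClosed_iInter fun y => h1 T y).inter
      ((isClosed_iInter fun T => isClosed_iInter fun y => h2 T y).inter
        (isClosed_iInter fun T => h3 T)))
  have hKcomp : IsCompact K := by
    refine IsCompact.of_isClosed_subset
      (isCompact_univ_pi fun T => isCompact_univ_pi fun y => isCompact_Icc (a := (0:ℝ)) (b := 1))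
      hKclosed ?_
    intro v hv
    rw [Set.mem_univ_pi]
    intro T
    rw [Set.mem_univ_pi]
    intro y
    refine ⟨(hv T).1 y, ?_⟩
    by_cases hy : y ∈ T
    · have hT : T.Nonempty := ⟨y, hy⟩
      calc v T y ≤ ∑ y', v T y' := Finset.single_le_sum (fun y' _ => (hv T).1 y') (mem_univ y)
        _ = 1 := (hv T).2.2 hT
    · rw [(hv T).2.1 y hy]; exact zero_le_one
  set S : Set (Fin m → ℝ) := φ '' K with hSdef
  have hSconv : Convex ℝ S := hKconv.linear_image φ
  have hScomp : IsCompact S := hKcomp.image φ.continuous_of_finiteDimensional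
  have hqS : q ∈ S := by
    by_contra hq
    obtain ⟨f, u, hfS, hfq⟩ :=
      geometric_hahn_banach_closed_point hSconv hScomp.isClosed hq
    set h : Fin m → ℝ := fun y => f (fun j => if y = j then 1 else 0) with hhdef
    have hrep : ∀ w : Fin m → ℝ, f w = ∑ y, w y * h y := by
      intro w
      conv_lhs => rw [pi_eq_sum_univ w]
      rw [map_sum]
      refine Finset.sum_congr rfl fun y _ => ?_
      rw [_root_.map_smul, smul_eq_mul]
    -- select a maximizer point mass for each T
    have hsel : ∀ T : Finset (Fin m), ∃ w : Fin m → ℝ,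
        (∀ y, 0 ≤ w y) ∧ (∀ y, y ∉ T → w y = 0) ∧ (T.Nonempty → ∑ y, w y = 1) ∧
        (∑ y, w y * h y = cmax h T) := by
      intro T
      by_cases hT : T.Nonempty
      · obtain ⟨y0, hy0T, hy0⟩ := Finset.exists_mem_eq_sup' hT h
        refine ⟨fun y => if y = y0 then 1 else 0, fun y => by positivity,
          fun y hy => ?_, fun _ => ?_, ?_⟩
        · have hne : y ≠ y0 := by rintro rfl; exact hy hy0T
          simp [hne]
        · simp
        · rw [Finset.sum_eq_single y0]
          · simp [cmax, dif_pos hT, hy0]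
          · intro y _ hy; simp [hy]
          · intro hmem; exact absurd (mem_univ _) hmem
      · refine ⟨0, fun y => le_refl 0, fun y _ => rfl, fun h' => absurd h' hT, ?_⟩
        simp [cmax, dif_neg hT]
    choose w hw0 hwz hws hwc using hsel
    have hwK : w ∈ K := fun T => ⟨hw0 T, hwz T, hws T⟩
    have hφw : f (φ w) = ∑ T, p T * cmax h T := by
      rw [hrep]
      have : ∀ y, (φ w) y = ∑ T, p T * w T y := fun y => rfl
      calc ∑ y, (φ w) y * h y = ∑ y, ∑ T, p T * w T y * h y := by
            refine Finset.sum_congr rfl fun y _ => ?_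
            rw [this y, Finset.sum_mul]
        _ = ∑ T, ∑ y, p T * w T y * h y := Finset.sum_comm
        _ = ∑ T, p T * cmax h T := by
            refine Finset.sum_congr rfl fun T _ => ?_
            rw [← hwc T, Finset.mul_sum]
            refine Finset.sum_congr rfl fun y _ => by ring
    have h1 : f q ≤ f (φ w) := by
      rw [hrep q, hφw]
      exact hineq h
    have h2 : f (φ w) < u := hfS _ ⟨w, hwK, rfl⟩
    linarith
  obtain ⟨v, hvK, hvq⟩ := hqS
  exact ⟨v, fun T => (hvK T).1, fun T => (hvK T).2.1, fun T => (hvK T).2.2,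
    fun y => congrFun hvq y⟩


lemma construct_pi (P : Measure (Fin m → ℝ)) [IsProbabilityMeasure P]
    (δ q : Fin m → ℝ) (v : Finset (Fin m) → Fin m → ℝ)
    (hv0 : ∀ T y, 0 ≤ v T y) (hv1 : ∀ T y, y ∉ T → v T y = 0)
    (hv2 : ∀ T : Finset (Fin m), T.Nonempty → ∑ y, v T y = 1)
    (hvq : ∀ y, ∑ T, (P (Aset δ T)).toReal * v T y = q y) :
    ∃ π : Measure ((Fin m → ℝ) × Fin m),
      IsProbabilityMeasure π ∧
      π.map Prod.fst = P ∧
      (∀ y, π.map Prod.snd {y} = ENNReal.ofReal (q y)) ∧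
      (∀ᵐ z ∂π, ∀ y' : Fin m, δ y' + z.1 y' ≤ δ z.2 + z.1 z.2) := by
  classical
  set π : Measure ((Fin m → ℝ) × Fin m) :=
    ∑ T : Finset (Fin m), ∑ y : Fin m, (ENNReal.ofReal (v T y)) •
      ((P.restrict (Aset δ T)).map (fun e => (e, y))) with hπdef
  have hmeas : ∀ y : Fin m, Measurable (fun e : Fin m → ℝ => (e, y)) :=
    fun y => measurable_id.prodMk measurable_const
  have happly : ∀ s : Set ((Fin m → ℝ) × Fin m), MeasurableSet s →
      π s = ∑ T : Finset (Fin m), ∑ y : Fin m,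
        ENNReal.ofReal (v T y) * P ((fun e : Fin m → ℝ => (e, y)) ⁻¹' s ∩ Aset δ T) := by
    intro s hs
    rw [hπdef, Measure.finset_sum_apply]
    refine Finset.sum_congr rfl fun T _ => ?_
    rw [Measure.finset_sum_apply]
    refine Finset.sum_congr rfl fun y _ => ?_
    rw [Measure.smul_apply, smul_eq_mul, Measure.map_apply (hmeas y) hs,
      Measure.restrict_apply (hs.preimage (hmeas y))]
  have hfst : π.map Prod.fst = P := by
    refine Measure.ext fun s hs => ?_
    rw [Measure.map_apply measurable_fst hs,
      happly _ (measurable_fst hs)]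
    have hpre : ∀ y : Fin m, (fun e : Fin m → ℝ => (e, y)) ⁻¹' (Prod.fst ⁻¹' s) = s := by
      intro y; rfl
    calc ∑ T : Finset (Fin m), ∑ y : Fin m,
          ENNReal.ofReal (v T y) * P ((fun e : Fin m → ℝ => (e, y)) ⁻¹' (Prod.fst ⁻¹' s) ∩ Aset δ T)
        = ∑ T : Finset (Fin m), P (s ∩ Aset δ T) := by
          refine Finset.sum_congr rfl fun T _ => ?_
          simp_rw [hpre]
          rw [← Finset.sum_mul]
          by_cases hT : T.Nonempty
          · rw [← ENNReal.ofReal_sum_of_nonneg (fun y _ => hv0 T y), hv2 T hT,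
              ENNReal.ofReal_one, one_mul]
          · have hTe : T = ∅ := Finset.not_nonempty_iff_eq_empty.1 hT
            rw [hTe, Aset_empty, Set.inter_empty, measure_empty, mul_zero]
      _ = P s := sum_measure_inter_Aset P δ hs
  have hprob : IsProbabilityMeasure π := by
    constructor
    have h1 : π Set.univ = (π.map Prod.fst) Set.univ := by
      rw [Measure.map_apply measurable_fst MeasurableSet.univ, Set.preimage_univ]
    rw [h1, hfst]
    exact measure_univ
  have hsnd : ∀ y : Fin m, π.map Prod.snd {y} = ENNReal.ofReal (q y) := by
    intro y0
    rw [Measure.map_apply measurable_snd (measurableSet_singleton y0),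
      happly _ (measurable_snd (measurableSet_singleton y0))]
    have hterm : ∀ T : Finset (Fin m), ∑ y : Fin m,
        ENNReal.ofReal (v T y) *
          P ((fun e : Fin m → ℝ => (e, y)) ⁻¹' (Prod.snd ⁻¹' {y0}) ∩ Aset δ T) =
        ENNReal.ofReal ((P (Aset δ T)).toReal * v T y0) := by
      intro T
      rw [Finset.sum_eq_single y0]
      · have : (fun e : Fin m → ℝ => (e, y0)) ⁻¹' (Prod.snd ⁻¹' {y0}) = Set.univ := by
          ext e; simp
        rw [this, Set.univ_inter, ENNReal.ofReal_mul (ENNReal.toReal_nonneg),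
          ENNReal.ofReal_toReal (measure_ne_top P _), mul_comm]
      · intro y _ hy
        have : (fun e : Fin m → ℝ => (e, y)) ⁻¹' (Prod.snd ⁻¹' {y0}) = ∅ := by
          ext e; simp [hy]
        rw [this, Set.empty_inter, measure_empty, mul_zero]
      · intro hmem; exact absurd (mem_univ _) hmem
    rw [Finset.sum_congr rfl fun T _ => hterm T,
      ← ENNReal.ofReal_sum_of_nonneg (fun T _ => mul_nonneg ENNReal.toReal_nonneg (hv0 T y0)),
      hvq y0]
  have hae : ∀ᵐ z ∂π, ∀ y' : Fin m, δ y' + z.1 y' ≤ δ z.2 + z.1 z.2 := by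
    have hmeasg : Measurable (fun z : (Fin m → ℝ) × Fin m => δ z.2 + z.1 z.2) := by
      refine Measurable.add ?_ ?_
      · exact (measurable_of_countable δ).comp measurable_snd
      · exact measurable_from_prod_countable_left fun y => measurable_pi_apply y
    have hBadMeas : MeasurableSet {z : (Fin m → ℝ) × Fin m |
        ¬ ∀ y' : Fin m, δ y' + z.1 y' ≤ δ z.2 + z.1 z.2} := by
      have : {z : (Fin m → ℝ) × Fin m | ∀ y' : Fin m, δ y' + z.1 y' ≤ δ z.2 + z.1 z.2} =
          ⋂ y' : Fin m, {z : (Fin m → ℝ) × Fin m | δ y' + z.1 y' ≤ δ z.2 + z.1 z.2} := by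
        ext z; simp
      have hgood : MeasurableSet {z : (Fin m → ℝ) × Fin m |
          ∀ y' : Fin m, δ y' + z.1 y' ≤ δ z.2 + z.1 z.2} := by
        rw [this]
        exact MeasurableSet.iInter fun y' =>
          measurableSet_le (measurable_const.add
            (Measurable.comp (measurable_pi_apply y') measurable_fst : Measurable
              fun z : (Fin m → ℝ) × Fin m => z.1 y')) hmeasg
      exact hgood.compl
    rw [ae_iff]
    rw [happly _ hBadMeas]
    refine Finset.sum_eq_zero fun T _ => Finset.sum_eq_zero fun y _ => ?_
    by_cases hv : v T y = 0
    · rw [hv, ENNReal.ofReal_zero, zero_mul]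
    · have hyT : y ∈ T := by
        by_contra hyT
        exact hv (hv1 T y hyT)
      have : (fun e : Fin m → ℝ => (e, y)) ⁻¹'
          {z : (Fin m → ℝ) × Fin m | ¬ ∀ y' : Fin m, δ y' + z.1 y' ≤ δ z.2 + z.1 z.2} ∩
          Aset δ T = ∅ := by
        ext e
        simp only [Set.mem_inter_iff, Set.mem_preimage, Set.mem_setOf_eq,
          Set.mem_empty_iff_false, iff_false, not_and]
        intro hbad hA
        refine hbad ?_
        have : y ∈ Amax δ e := by rw [hA]; exact hyT
        exact mem_Amax.1 this
      rw [this, measure_empty, mul_zero]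
  exact ⟨π, hprob, hfst, hsnd, hae⟩


lemma continuous_msup_abs : Continuous fun e : Fin m → ℝ => msup (fun y => |e y|) := by
  apply Continuous.finset_sup'_apply
  intro y _
  exact (continuous_apply y).abs

lemma forward_dir (P : Measure (Fin m → ℝ)) [IsProbabilityMeasure P]
    (hint : Integrable (fun e => msup (fun y => |e y|)) P)
    (q δ : Fin m → ℝ) (hq0 : ∀ y, 0 ≤ q y)
    (π : Measure ((Fin m → ℝ) × Fin m))
    (hprob : IsProbabilityMeasure π)
    (hfst : π.map Prod.fst = P)
    (hsnd : ∀ y, π.map Prod.snd {y} = ENNReal.ofReal (q y))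
    (hae : ∀ᵐ z ∂π, ∀ y' : Fin m, δ y' + z.1 y' ≤ δ z.2 + z.1 z.2)
    (δ' : Fin m → ℝ) :
    Fint P δ - ∑ y, q y * δ y ≤ Fint P δ' - ∑ y, q y * δ' y := by
  have hmeval : Measurable (fun z : (Fin m → ℝ) × Fin m => z.1 z.2) :=
    measurable_from_prod_countable_left fun y => measurable_pi_apply y
  have h1 : ∀ a : Fin m → ℝ, ∫ z, msup (fun y => a y + z.1 y) ∂π = Fint P a := by
    intro a
    rw [Fint, ← hfst, integral_map measurable_fst.aemeasurable]
    exact (continuous_msup_affine a).aestronglyMeasurable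
  have hint' : Integrable (fun z : (Fin m → ℝ) × Fin m => msup (fun y => |z.1 y|)) π := by
    exact (integrable_map_measure (μ := π) (f := Prod.fst)
      (g := fun e : Fin m → ℝ => msup (fun y => |e y|))
      (by rw [hfst]; exact continuous_msup_abs.aestronglyMeasurable)
      measurable_fst.aemeasurable).1 (by rw [hfst]; exact hint)
  have hIa : ∀ a : Fin m → ℝ,
      Integrable (fun z : (Fin m → ℝ) × Fin m => msup (fun y => a y + z.1 y)) π := by
    intro a
    exact (integrable_map_measure (μ := π) (f := Prod.fst)
      (g := fun e : Fin m → ℝ => msup (fun y => a y + e y))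
      (by rw [hfst]; exact (continuous_msup_affine a).aestronglyMeasurable)
      measurable_fst.aemeasurable).1 (by rw [hfst]; exact integrable_msup_affine P hint a)
  have hIsnd : ∀ a : Fin m → ℝ,
      Integrable (fun z : (Fin m → ℝ) × Fin m => a z.2) π := by
    intro a
    refine Integrable.mono' (integrable_const (msup (fun y => |a y|)))
      (((measurable_of_countable a).comp measurable_snd).aestronglyMeasurable) ?_
    exact Filter.Eventually.of_forall fun z => by
      simpa [Real.norm_eq_abs] using le_msup (fun y => |a y|) z.2
  have hIeval : Integrable (fun z : (Fin m → ℝ) × Fin m => z.1 z.2) π := by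
    refine Integrable.mono' hint' hmeval.aestronglyMeasurable ?_
    exact Filter.Eventually.of_forall fun z => by
      simpa [Real.norm_eq_abs] using le_msup (fun y => |z.1 y|) z.2
  haveI : IsProbabilityMeasure (π.map Prod.snd) :=
    Measure.isProbabilityMeasure_map measurable_snd.aemeasurable
  have hsum : ∀ a : Fin m → ℝ, ∫ z, a z.2 ∂π = ∑ y, q y * a y := by
    intro a
    rw [← integral_map measurable_snd.aemeasurable
      ((measurable_of_countable a).aestronglyMeasurable),
      integral_fintype (Integrable.of_finite)]
    refine Finset.sum_congr rfl fun y _ => ?_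
    rw [measureReal_def, hsnd y, smul_eq_mul, ENNReal.toReal_ofReal (hq0 y)]
  have haeEq : ∀ᵐ z ∂π, msup (fun y => δ y + z.1 y) = δ z.2 + z.1 z.2 := by
    filter_upwards [hae] with z hz
    exact le_antisymm (msup_le hz) (le_msup (fun y => δ y + z.1 y) z.2)
  have hEq : Fint P δ - ∑ y, q y * δ y = ∫ z, z.1 z.2 ∂π := by
    rw [← h1 δ, ← hsum δ, ← integral_sub (hIa δ) (hIsnd δ)]
    refine integral_congr_ae ?_
    filter_upwards [haeEq] with z hz
    rw [hz]; ring
  have hGe : ∫ z, z.1 z.2 ∂π ≤ Fint P δ' - ∑ y, q y * δ' y := by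
    rw [← h1 δ', ← hsum δ', ← integral_sub (hIa δ') (hIsnd δ')]
    refine integral_mono_ae hIeval ((hIa δ').sub (hIsnd δ')) ?_
    refine Filter.Eventually.of_forall fun z => ?_
    have := le_msup (fun y => δ' y + z.1 y) z.2
    simp only
    linarith
  rw [hEq]
  exact hGe

/-- The combined main equivalence. -/
theorem main_iff (P : Measure (Fin m → ℝ)) [IsProbabilityMeasure P]
    (hint : Integrable (fun e => msup (fun y => |e y|)) P)
    (q : Fin m → ℝ) (hq0 : ∀ y, 0 ≤ q y) (hq1 : ∑ y, q y = 1)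
    (δ : Fin m → ℝ) :
    (∃ π : Measure ((Fin m → ℝ) × Fin m),
        IsProbabilityMeasure π ∧
        π.map Prod.fst = P ∧
        (∀ y, π.map Prod.snd {y} = ENNReal.ofReal (q y)) ∧
        (∀ᵐ z ∂π, ∀ y' : Fin m, δ y' + z.1 y' ≤ δ z.2 + z.1 z.2)) ↔
      (∀ δ' : Fin m → ℝ, Fint P δ - ∑ y, q y * δ y ≤ Fint P δ' - ∑ y, q y * δ' y) := by
  constructor
  · rintro ⟨π, hprob, hfst, hsnd, hae⟩ δ'
    exact forward_dir P hint q δ hq0 π hprob hfst hsnd hae δ'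
  · intro hmin
    have hkey : ∀ h : Fin m → ℝ, ∑ y, q y * h y ≤
        ∑ T : Finset (Fin m), (P (Aset δ T)).toReal * cmax h T := by
      intro h
      have := key_ineq P hint q δ hmin h
      rwa [integral_cmax] at this
    obtain ⟨v, hv0, hv1, hv2, hvq⟩ :=
      exists_weights (fun T => (P (Aset δ T)).toReal) (fun T => ENNReal.toReal_nonneg) q hkey
    exact construct_pi P δ q v hv0 hv1 hv2 hvq

end DemandDual


open MeasureTheory

/-- Demand inversion as an optimal transport dual problem: with `𝒴 = Fin m`, `ε ∼ P`,
`E[max_y |ε_y|] < ∞` and `G(δ) = E[max_y {δ_y + ε_y}]`, a systematic utility vector `δ`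
induces the market shares `q` (i.e. `δ ∈ D(q)`) if and only if `ψ := −δ` minimizes
`ψ ↦ E[max_y {ε_y − ψ_y}] + Σ_y q_y ψ_y`; equivalently, if and only if `δ` minimizes
`δ ↦ G(δ) − Σ_y q_y δ_y`. -/
theorem demand_inversion_dual
    (m : ℕ) [NeZero m]
    (P : Measure (Fin m → ℝ)) [IsProbabilityMeasure P]
    (hint : Integrable (fun e => ⨆ y, |e y|) P)
    (G : (Fin m → ℝ) → ℝ)
    (hG : G = fun δ => ∫ e, (⨆ y, (δ y + e y)) ∂P)
    (q : Fin m → ℝ) (hq0 : ∀ y, 0 ≤ q y) (hq1 : ∑ y, q y = 1)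
    (δ : Fin m → ℝ) :
    -- δ ∈ D(q) ...
    ((∃ π : Measure ((Fin m → ℝ) × Fin m),
        IsProbabilityMeasure π ∧
        π.map Prod.fst = P ∧
        (∀ y, π.map Prod.snd {y} = ENNReal.ofReal (q y)) ∧
        (∀ᵐ z ∂π, ∀ y' : Fin m, δ y' + z.1 y' ≤ δ z.2 + z.1 z.2)) ↔
      -- ... iff ψ := −δ minimizes ψ ↦ E[max_y {ε_y − ψ_y}] + Σ_y q_y ψ_y
      (∀ ψ' : Fin m → ℝ,
        ∫ e, (⨆ y, (e y - (-δ) y)) ∂P + ∑ y, q y * (-δ) y ≤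
          ∫ e, (⨆ y, (e y - ψ' y)) ∂P + ∑ y, q y * ψ' y)) ∧
    -- equivalently, δ ∈ D(q) iff δ minimizes δ' ↦ G(δ') − Σ_y q_y δ'_y
    ((∃ π : Measure ((Fin m → ℝ) × Fin m),
        IsProbabilityMeasure π ∧
        π.map Prod.fst = P ∧
        (∀ y, π.map Prod.snd {y} = ENNReal.ofReal (q y)) ∧
        (∀ᵐ z ∂π, ∀ y' : Fin m, δ y' + z.1 y' ≤ δ z.2 + z.1 z.2)) ↔
      (∀ δ' : Fin m → ℝ, G δ - ∑ y, q y * δ y ≤ G δ' - ∑ y, q y * δ' y)) := by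
  classical
  have hint' : Integrable (fun e => DemandDual.msup (fun y => |e y|)) P := by
    have h : (fun e : Fin m → ℝ => DemandDual.msup (fun y => |e y|)) =
        fun e => ⨆ y, |e y| := funext fun e => DemandDual.msup_eq_ciSup _
    rw [h]; exact hint
  have hmain := DemandDual.main_iff P hint' q hq0 hq1 δ
  have hFG : ∀ a : Fin m → ℝ, DemandDual.Fint P a = G a := by
    intro a
    have h : (fun e : Fin m → ℝ => DemandDual.msup (fun y => a y + e y)) =
        fun e => ⨆ y, (a y + e y) := funext fun e => DemandDual.msup_eq_ciSup _
    rw [DemandDual.Fint, h, hG]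
  have hB2 : (∀ δ' : Fin m → ℝ,
      DemandDual.Fint P δ - ∑ y, q y * δ y ≤ DemandDual.Fint P δ' - ∑ y, q y * δ' y) ↔
      (∀ δ' : Fin m → ℝ, G δ - ∑ y, q y * δ y ≤ G δ' - ∑ y, q y * δ' y) := by
    simp_rw [hFG]
  have hmain2 := hmain.trans hB2
  have hψ : ∀ ρ : Fin m → ℝ,
      (∫ e, (⨆ y, (e y - ρ y)) ∂P + ∑ y, q y * ρ y) = G (-ρ) - ∑ y, q y * (-ρ) y := by
    intro ρ
    rw [hG]
    have h1 : (fun e : Fin m → ℝ => ⨆ y, (e y - ρ y)) =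
        fun e => ⨆ y, ((-ρ) y + e y) := by
      funext e
      congr 1
      funext y
      simp only [Pi.neg_apply]
      ring
    rw [h1]
    have h2 : ∑ y, q y * (-ρ) y = - ∑ y, q y * ρ y := by
      rw [← Finset.sum_neg_distrib]
      exact Finset.sum_congr rfl fun y _ => by simp [Pi.neg_apply, mul_neg]
    rw [h2]
    ring
  have hB1 : (∀ ψ' : Fin m → ℝ,
      ∫ e, (⨆ y, (e y - (-δ) y)) ∂P + ∑ y, q y * (-δ) y ≤
        ∫ e, (⨆ y, (e y - ψ' y)) ∂P + ∑ y, q y * ψ' y) ↔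
      (∀ δ' : Fin m → ℝ, G δ - ∑ y, q y * δ y ≤ G δ' - ∑ y, q y * δ' y) := by
    constructor
    · intro H δ'
      have := H (-δ')
      rw [hψ (-δ), hψ (-δ')] at this
      simpa only [neg_neg] using this
    · intro H ψ'
      rw [hψ (-δ), hψ ψ']
      simp only [neg_neg]
      exact H (-ψ')
  exact ⟨hmain2.trans hB1.symm, hmain2⟩
end

section
/- Characterization of the zero Afriat transport value: let x_1,…,x_n ∈ ℝ^d, p_1,…,p_n ∈ ℝ^d, and λ ∈ ℝ^n with λ_i ≥ 0 and Σ_i λ_i = 1. Define Φ^λ_{ij} = λ_i · p_i⊤(x_i − x_j) and W(λ) as the maximum of Σ_{i,j} π_{ij} Φ^λ_{ij} over n×n matrices π with π_{ij} ≥ 0 and all row sums and column sums equal to 1/n. Then W(λ) = 0 if and only if there exists u ∈ ℝ^n satisfying Afriat's inequalities u_i − u_j ≥ λ_i p_i⊤(x_i − x_j) for all i, j ∈ {1,…,n}. -/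
namespace AfriatAux

variable {n : ℕ} (c : Fin n → Fin n → ℝ)

/-- Cost of a walk given as a list of vertices. -/
def cost : List (Fin n) → ℝ
  | [] => 0
  | [_] => 0
  | a :: b :: t => c a b + cost (b :: t)

@[simp] lemma cost_nil : cost c [] = 0 := rfl
@[simp] lemma cost_single (a : Fin n) : cost c [a] = 0 := rfl
lemma cost_cons (a b : Fin n) (t : List (Fin n)) :
    cost c (a :: b :: t) = c a b + cost c (b :: t) := rfl

lemma cost_append (s : List (Fin n)) (a : Fin n) (t : List (Fin n)) :
    cost c (s ++ a :: t) = cost c (s ++ [a]) + cost c (a :: t) := by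
  induction s with
  | nil => simp
  | cons x s ih =>
    cases s with
    | nil => simp [cost_cons]
    | cons y s' =>
      simp only [List.cons_append, cost_cons] at ih ⊢
      rw [ih]; ring

lemma cost_concat (s : List (Fin n)) (b a : Fin n) :
    cost c (s ++ [b, a]) = cost c (s ++ [b]) + c b a := by
  have h := cost_append c s b [a]
  simpa [cost_cons] using h

variable [NeZero n]

/-- Bellman–Ford iteration. -/
def bf : ℕ → Fin n → ℝ
  | 0, _ => 0
  | (k+1), j => min (bf k j)
      (Finset.univ.inf' Finset.univ_nonempty (fun i => bf k i + c i j))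

lemma bf_succ_le (k : ℕ) (j : Fin n) : bf c (k+1) j ≤ bf c k j := min_le_left _ _

lemma bf_succ_le' (k : ℕ) (i j : Fin n) : bf c (k+1) j ≤ bf c k i + c i j :=
  le_trans (min_le_right _ _) (Finset.inf'_le _ (Finset.mem_univ i))

/-- L1: Bellman–Ford values lower bound walk costs. -/
lemma bf_le_cost : ∀ (k : ℕ) (l : List (Fin n)) (h : l ≠ []),
    l.length ≤ k + 1 → bf c k (l.getLast h) ≤ cost c l := by
  intro k
  induction k with
  | zero =>
    intro l h hlen
    match l, h with
    | [a], _ => simp [bf]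
    | (a :: b :: t), _ => simp at hlen
  | succ k ih =>
    intro l h hlen
    by_cases hl : l.length ≤ k + 1
    · exact le_trans (bf_succ_le c k _) (ih l h hl)
    · -- l.length = k + 2 ≥ 2, split off the last vertex
      have h2 : 2 ≤ l.length := by omega
      obtain ⟨s, j, rfl⟩ : ∃ s a, l = s ++ [a] := ⟨l.dropLast, l.getLast h, by
        simp [List.dropLast_append_getLast h]⟩
      have hs : s ≠ [] := by
        intro hs0; subst hs0; simp at h2
      obtain ⟨s', b, rfl⟩ : ∃ s' b, s = s' ++ [b] := ⟨s.dropLast, s.getLast hs, by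
        simp [List.dropLast_append_getLast hs]⟩
      have hlast : (s' ++ [b] ++ [j]).getLast h = j := by
        rw [List.getLast_append_of_ne_nil _ (by simp : ([j] : List (Fin n)) ≠ [])]; rfl
      rw [hlast]
      have hcost : cost c (s' ++ [b] ++ [j]) = cost c (s' ++ [b]) + c b j := by
        have := cost_concat c s' b j
        simpa using this
      rw [hcost]
      have hlastb : (s' ++ [b]).getLast (by simp) = b := by
        rw [List.getLast_append_of_ne_nil _ (by simp : ([b] : List (Fin n)) ≠ [])]; rfl
      have hlen' : (s' ++ [b]).length ≤ k + 1 := by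
        simp only [List.length_append] at hlen ⊢
        simp at hlen ⊢; omega
      have := ih (s' ++ [b]) (by simp) hlen'
      rw [hlastb] at this
      calc bf c (k+1) j ≤ bf c k b + c b j := bf_succ_le' c k b j
        _ ≤ cost c (s' ++ [b]) + c b j := by linarith

/-- L2: Bellman–Ford values are achieved by walks. -/
lemma exists_walk_bf (k : ℕ) (j : Fin n) :
    ∃ (l : List (Fin n)) (h : l ≠ []), l.length ≤ k + 1 ∧ l.getLast h = j ∧
      cost c l = bf c k j := by
  induction k generalizing j with
  | zero => exact ⟨[j], by simp, by simp, by simp, by simp [bf]⟩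
  | succ k ih =>
    rcases min_cases (bf c k j)
        (Finset.univ.inf' Finset.univ_nonempty (fun i => bf c k i + c i j)) with
      ⟨hmin, _⟩ | ⟨hmin, _⟩
    · obtain ⟨l, h, hlen, hlast, hcost⟩ := ih j
      exact ⟨l, h, by omega, hlast, by rw [hcost]; exact (by simp [bf, hmin])⟩
    · obtain ⟨i, _, hi⟩ := Finset.exists_mem_eq_inf' Finset.univ_nonempty
        (fun i => bf c k i + c i j)
      obtain ⟨l, h, hlen, hlast, hcost⟩ := ih i
      refine ⟨l ++ [j], by simp, by simp; omega, List.getLast_append_of_ne_nil _ (by simp), ?_⟩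
      obtain ⟨s, b, rfl⟩ : ∃ s b, l = s ++ [b] := ⟨l.dropLast, l.getLast h, by
        simp [List.dropLast_append_getLast h]⟩
      have hb : b = i := by
        rw [← hlast, List.getLast_append_of_ne_nil _ (by simp : ([b] : List (Fin n)) ≠ [])]
        rfl
      subst hb
      rw [show s ++ [b] ++ [j] = s ++ [b, j] by simp, cost_concat]
      rw [hcost]
      show bf c k b + c b j = bf c (k+1) j
      have hdef : bf c (k+1) j = min (bf c k j)
          (Finset.univ.inf' Finset.univ_nonempty (fun i => bf c k i + c i j)) := rfl
      rw [hdef, hmin, hi]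

/-- Duplicate decomposition. -/
lemma exists_dup_decomp : ∀ (l : List (Fin n)), ¬ l.Nodup →
    ∃ (b : Fin n) (l1 l2 l3 : List (Fin n)), l = l1 ++ b :: l2 ++ b :: l3 := by
  intro l
  induction l with
  | nil => intro h; exact absurd List.nodup_nil h
  | cons x t ih =>
    intro h
    rw [List.nodup_cons] at h
    push_neg at h
    by_cases hx : x ∈ t
    · obtain ⟨s, r, rfl⟩ := List.append_of_mem hx
      exact ⟨x, [], s, r, by simp⟩
    · obtain ⟨b, l1, l2, l3, rfl⟩ := ih (h hx)
      exact ⟨b, x :: l1, l2, l3, by simp⟩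



set_option linter.unusedSectionVars false

/-- cost as an indexed sum. -/
lemma cost_eq_sum (a0 : Fin n) : ∀ l : List (Fin n),
    cost c l = ∑ k ∈ Finset.range (l.length - 1), c (l.getD k a0) (l.getD (k+1) a0)
  | [] => by simp [cost]
  | [x] => by simp [cost]
  | (x :: y :: t) => by
    rw [cost_cons, cost_eq_sum a0 (y :: t)]
    have hlen : (x :: y :: t).length - 1 = ((y :: t).length - 1) + 1 := by simp
    rw [hlen, Finset.sum_range_succ']
    simp only [List.getD_cons_succ, List.getD_cons_zero]
    ring

lemma sum_map_eq_range (f : Fin n → ℝ) (a0 : Fin n) : ∀ l : List (Fin n),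
    (l.map f).sum = ∑ k ∈ Finset.range l.length, f (l.getD k a0)
  | [] => by simp
  | (x :: t) => by
    rw [List.map_cons, List.sum_cons, sum_map_eq_range f a0 t, List.length_cons,
      Finset.sum_range_succ']
    simp only [List.getD_cons_succ, List.getD_cons_zero]
    ring

/-- Simple cycle nonnegativity from the permutation hypothesis. -/
lemma cycle_nonneg (hc : ∀ i, c i i = 0)
    (H : ∀ σ : Equiv.Perm (Fin n), 0 ≤ ∑ i, c i (σ i))
    (a : Fin n) (l : List (Fin n)) (hnd : (a :: l).Nodup) :
    0 ≤ cost c (a :: l ++ [a]) := by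
  set m : List (Fin n) := a :: l with hm
  have hmlen : m.length = l.length + 1 := by simp [hm]
  set N := m.length with hN
  have hNpos : 0 < N := by omega
  have key : ∑ i, c i (m.formPerm i) = cost c (m ++ [a]) := by
    have step1 : ∑ i, c i (m.formPerm i) = ∑ i ∈ m.toFinset, c i (m.formPerm i) := by
      refine (Finset.sum_subset (Finset.subset_univ _) ?_).symm
      intro i _ hi
      rw [List.formPerm_apply_of_notMem (by simpa using hi), hc]
    have step2 : ∑ i ∈ m.toFinset, c i (m.formPerm i)
        = ((m.map (fun i => c i (m.formPerm i))).sum) := List.sum_toFinset _ hnd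
    have step3 : ((m.map (fun i => c i (m.formPerm i))).sum)
        = ∑ k ∈ Finset.range N, c (m.getD k a) (m.formPerm (m.getD k a)) :=
      sum_map_eq_range (fun i => c i (m.formPerm i)) a m
    rw [step1, step2, step3, cost_eq_sum c a (m ++ [a])]
    have hlen2 : (m ++ [a]).length - 1 = N := by simp [hN]
    rw [hlen2]
    refine Finset.sum_congr rfl ?_
    intro k hk
    rw [Finset.mem_range] at hk
    have hkN : k < N := hk
    have e1 : (m ++ [a]).getD k a = m.getD k a := List.getD_append _ _ _ _ hkN
    have e2 : m.formPerm (m.getD k a) = (m ++ [a]).getD (k+1) a := by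
      have hgc : ∀ (i j : ℕ) (h1 : i < m.length) (h2 : j < m.length), i = j →
          m[i]'h1 = m[j]'h2 := by
        intro i j h1 h2 h; subst h; rfl
      rw [List.getD_eq_getElem _ _ hkN, List.formPerm_apply_getElem _ hnd k hkN]
      by_cases hk1 : k + 1 < m.length
      · rw [List.getD_append _ _ _ _ hk1, List.getD_eq_getElem _ _ hk1]
        exact hgc _ _ _ _ (Nat.mod_eq_of_lt hk1)
      · have hk1' : k + 1 = m.length := by omega
        have h0 : (0:ℕ) < m.length := by omega
        have hx := hgc ((k+1) % m.length) 0 (Nat.mod_lt _ (by omega)) h0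
          (by rw [hk1', Nat.mod_self])
        have hsub : k + 1 - m.length = 0 := by omega
        rw [List.getD_append_right _ _ _ _ (by omega), hsub, hx]
        simp [hm]
    rw [e1, e2]
  have := H m.formPerm
  rw [key] at this
  simpa using this

end AfriatAux

namespace AfriatAux
variable {n : ℕ} (c : Fin n → Fin n → ℝ) [NeZero n]

/-- Every closed walk has nonnegative cost. -/
lemma closed_nonneg (hc : ∀ i, c i i = 0)
    (H : ∀ σ : Equiv.Perm (Fin n), 0 ≤ ∑ i, c i (σ i)) :
    ∀ (N : ℕ) (l : List (Fin n)), l.length ≤ N → ∀ a : Fin n,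
      0 ≤ cost c (a :: (l ++ [a])) := by
  intro N
  induction N with
  | zero =>
    intro l hl a
    have : l = [] := List.length_eq_zero_iff.mp (by omega)
    subst this
    simp [cost_cons, hc]
  | succ N ih =>
    intro l hl a
    by_cases ha : a ∈ l
    · obtain ⟨s, t, rfl⟩ := List.append_of_mem ha
      have hsplit : a :: ((s ++ a :: t) ++ [a]) = (a :: s) ++ a :: (t ++ [a]) := by simp
      rw [hsplit, cost_append]
      have h1 : 0 ≤ cost c ((a :: s) ++ [a]) := by
        have := ih s (by simp at hl ⊢; omega) a
        simpa using this
      have h2 : 0 ≤ cost c (a :: (t ++ [a])) := ih t (by simp at hl ⊢; omega) a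
      linarith
    · by_cases hnd : l.Nodup
      · exact cycle_nonneg c hc H a l (List.nodup_cons.mpr ⟨ha, hnd⟩)
      · obtain ⟨b, l1, l2, l3, rfl⟩ := exists_dup_decomp _ hnd
        have e1 : a :: ((l1 ++ b :: l2 ++ b :: l3) ++ [a])
            = (a :: l1) ++ b :: (l2 ++ b :: (l3 ++ [a])) := by simp
        rw [e1, cost_append c (a :: l1) b (l2 ++ b :: (l3 ++ [a]))]
        have e2 : (b : Fin n) :: (l2 ++ b :: (l3 ++ [a])) = (b :: l2) ++ b :: (l3 ++ [a]) := by
          simp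
        rw [e2, cost_append c (b :: l2) b (l3 ++ [a])]
        have h2 : 0 ≤ cost c ((b :: l2) ++ [b]) := by
          have := ih l2 (by simp at hl ⊢; omega) b
          simpa using this
        have e3 : cost c ((a :: l1) ++ [b]) + cost c (b :: (l3 ++ [a]))
            = cost c ((a :: l1) ++ b :: (l3 ++ [a])) := (cost_append c _ _ _).symm
        have e4 : (a :: l1) ++ b :: (l3 ++ [a]) = a :: ((l1 ++ b :: l3) ++ [a]) := by simp
        have h1 : 0 ≤ cost c ((a :: l1) ++ b :: (l3 ++ [a])) := by
          rw [e4]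
          exact ih (l1 ++ b :: l3) (by simp at hl ⊢; omega) a
        linarith

/-- Walk shortening: every walk is dominated by a duplicate-free walk with the same endpoint. -/
lemma shorten (hc : ∀ i, c i i = 0)
    (H : ∀ σ : Equiv.Perm (Fin n), 0 ≤ ∑ i, c i (σ i)) :
    ∀ (N : ℕ) (l : List (Fin n)) (h : l ≠ []), l.length ≤ N →
      ∃ (l' : List (Fin n)) (h' : l' ≠ []), l'.Nodup ∧ l'.getLast h' = l.getLast h ∧
        cost c l' ≤ cost c l := by
  intro N
  induction N with
  | zero =>
    intro l h hl
    exact absurd (List.length_eq_zero_iff.mp (by omega)) h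
  | succ N ih =>
    intro l h hl
    by_cases hnd : l.Nodup
    · exact ⟨l, h, hnd, rfl, le_refl _⟩
    · obtain ⟨b, l1, l2, l3, rfl⟩ := exists_dup_decomp _ hnd
      have hm : l1 ++ b :: l3 ≠ [] := by simp
      have hcl : cost c (l1 ++ b :: l2 ++ b :: l3)
          = cost c (l1 ++ [b]) + (cost c ((b :: l2) ++ [b]) + cost c (b :: l3)) := by
        have e1 : (l1 ++ b :: l2 ++ b :: l3 : List (Fin n)) = l1 ++ b :: (l2 ++ b :: l3) := by
          simp
        rw [e1, cost_append c l1 b (l2 ++ b :: l3)]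
        have e2 : (b : Fin n) :: (l2 ++ b :: l3) = (b :: l2) ++ b :: l3 := by simp
        rw [e2, cost_append c (b :: l2) b l3]
      have hcyc : 0 ≤ cost c ((b :: l2) ++ [b]) := by
        have := closed_nonneg c hc H l2.length l2 le_rfl b
        simpa using this
      have hcm : cost c (l1 ++ b :: l3) = cost c (l1 ++ [b]) + cost c (b :: l3) :=
        cost_append c _ _ _
      have hlast : (l1 ++ b :: l3).getLast hm = (l1 ++ b :: l2 ++ b :: l3).getLast h := by
        rw [List.getLast_append_of_ne_nil _ (l' := b :: l3) (by simp)]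
        have e1 : (l1 ++ b :: l2 ++ b :: l3 : List (Fin n))
            = (l1 ++ b :: l2) ++ (b :: l3) := by simp
        rw [show (l1 ++ b :: l2 ++ b :: l3 : List (Fin n)).getLast h
            = ((l1 ++ b :: l2) ++ (b :: l3)).getLast (by simp) from by congr 1 <;> simp]
        rw [List.getLast_append_of_ne_nil _ (l' := b :: l3) (by simp)]
      obtain ⟨l', h', hnd', hlast', hcost'⟩ := ih (l1 ++ b :: l3) hm (by simp at hl ⊢; omega)
      exact ⟨l', h', hnd', by rw [hlast', hlast], by
        rw [hcl]; rw [hcm] at hcost'; linarith⟩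

/-- Existence of a potential given nonnegative permutation sums. -/
lemma exists_potential (hc : ∀ i, c i i = 0)
    (H : ∀ σ : Equiv.Perm (Fin n), 0 ≤ ∑ i, c i (σ i)) :
    ∃ u : Fin n → ℝ, ∀ i j, u j ≤ u i + c i j := by
  refine ⟨bf c n, fun i j => ?_⟩
  have h1 : bf c (n+1) j ≤ bf c n i + c i j := bf_succ_le' c n i j
  have h2 : bf c n j ≤ bf c (n+1) j := by
    obtain ⟨l, h, hlen, hlast, hcost⟩ := exists_walk_bf c (n+1) j
    obtain ⟨l', h', hnd', hlast', hcost'⟩ := shorten c hc H l.length l h le_rfl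
    have hlen' : l'.length ≤ n + 1 := by
      have := hnd'.length_le_card
      simpa using Nat.le_succ_of_le (by simpa using this)
    have hb := bf_le_cost c n l' h' hlen'
    rw [hlast', hlast] at hb
    linarith
  linarith

end AfriatAux
/-- Characterization of the zero Afriat transport value: with
`Φ^λ_{ij} = λ_i ⟨p_i, x_i − x_j⟩` and `W(λ)` the maximum of `Σ_{ij} π_{ij} Φ^λ_{ij}` over
nonnegative matrices `π` with all row and column sums equal to `1/n`, one has `W(λ) = 0`
if and only if Afriat's inequalities `u_i − u_j ≥ λ_i ⟨p_i, x_i − x_j⟩` admit a solution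
`u ∈ ℝ^n`. -/
theorem afriat_transport_value_zero_iff
    (n d : ℕ) (x p : Fin n → Fin d → ℝ)
    (lam : Fin n → ℝ) (hlam0 : ∀ i, 0 ≤ lam i) (hlam1 : ∑ i, lam i = 1) :
    sSup {v : ℝ | ∃ π : Fin n → Fin n → ℝ,
        (∀ i j, 0 ≤ π i j) ∧
        (∀ i, ∑ j, π i j = 1 / n) ∧
        (∀ j, ∑ i, π i j = 1 / n) ∧
        v = ∑ i, ∑ j, π i j * (lam i * ∑ k, p i k * (x i k - x j k))} = 0 ↔
      ∃ u : Fin n → ℝ, ∀ i j, lam i * ∑ k, p i k * (x i k - x j k) ≤ u i - u j := by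
  have hn : n ≠ 0 := by
    rintro rfl
    simp at hlam1
  haveI : NeZero n := ⟨hn⟩
  have hnpos : (0:ℝ) < n := by positivity
  set Φ : Fin n → Fin n → ℝ := fun i j => lam i * ∑ k, p i k * (x i k - x j k) with hΦdef
  have hΦ0 : ∀ i, Φ i i = 0 := by intro i; simp [hΦdef]
  set S : Set ℝ := {v : ℝ | ∃ π : Fin n → Fin n → ℝ,
      (∀ i j, 0 ≤ π i j) ∧
      (∀ i, ∑ j, π i j = 1 / n) ∧
      (∀ j, ∑ i, π i j = 1 / n) ∧
      v = ∑ i, ∑ j, π i j * Φ i j} with hSdef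
  -- 0 is attained (diagonal coupling)
  have h0S : (0:ℝ) ∈ S := by
    refine ⟨fun i j => if i = j then 1/n else 0, fun i j => by positivity, ?_, ?_, ?_⟩
    · intro i; simp
    · intro j; simp
    · have : ∀ i : Fin n, ∑ j, (if i = j then (1:ℝ)/n else 0) * Φ i j = 0 := by
        intro i
        rw [Finset.sum_eq_single i]
        · simp [hΦ0]
        · intro b _ hb; simp [Ne.symm hb]
        · simp
      simp [this, hΦ0]
  -- boundedness
  have hbdd : BddAbove S := by
    refine ⟨∑ i, ∑ j, (1/n) * |Φ i j|, ?_⟩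
    rintro v ⟨π, hπ0, hrow, _, rfl⟩
    refine Finset.sum_le_sum fun i _ => Finset.sum_le_sum fun j _ => ?_
    have hπle : π i j ≤ 1/n := by
      rw [← hrow i]
      exact Finset.single_le_sum (fun j' _ => hπ0 i j') (Finset.mem_univ j)
    calc π i j * Φ i j ≤ π i j * |Φ i j| :=
          mul_le_mul_of_nonneg_left (le_abs_self _) (hπ0 i j)
      _ ≤ (1/n) * |Φ i j| := mul_le_mul_of_nonneg_right hπle (abs_nonneg _)
  constructor
  · -- sSup = 0 → potentials exist
    intro hsup
    have hle : ∀ v ∈ S, v ≤ 0 := fun v hv => hsup ▸ le_csSup hbdd hv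
    have Hperm : ∀ σ : Equiv.Perm (Fin n), 0 ≤ ∑ i, (fun i j => -(Φ i j)) i (σ i) := by
      intro σ
      have hmem : (∑ i, (1/(n:ℝ)) * Φ i (σ i)) ∈ S := by
        refine ⟨fun i j => if j = σ i then 1/n else 0, fun i j => by positivity, ?_, ?_, ?_⟩
        · intro i; simp
        · intro j
          show ∑ i, (if j = σ i then (1:ℝ)/n else 0) = 1/n
          rw [Equiv.sum_comp σ (fun k => if j = k then (1:ℝ)/n else 0)]
          simp
        · refine Finset.sum_congr rfl fun i _ => ?_
          rw [Finset.sum_eq_single (σ i)]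
          · simp
          · intro b _ hb; simp [hb]
          · simp
      have := hle _ hmem
      rw [← Finset.mul_sum] at this
      have h2 : ∑ i, Φ i (σ i) ≤ 0 := by
        have hpos : 0 < 1/(n:ℝ) := by positivity
        nlinarith
      simpa using h2
    obtain ⟨u, hu⟩ := AfriatAux.exists_potential (fun i j => -(Φ i j)) (fun i => by simp [hΦ0]) Hperm
    exact ⟨u, fun i j => by have := hu i j; simp [hΦdef] at this ⊢; linarith⟩
  · -- potentials exist → sSup = 0
    rintro ⟨u, hu⟩
    refine le_antisymm (csSup_le ⟨0, h0S⟩ ?_) (le_csSup hbdd h0S)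
    rintro v ⟨π, hπ0, hrow, hcol, rfl⟩
    have hstep : ∑ i, ∑ j, π i j * Φ i j ≤ ∑ i, ∑ j, π i j * (u i - u j) :=
      Finset.sum_le_sum fun i _ => Finset.sum_le_sum fun j _ =>
        mul_le_mul_of_nonneg_left (hu i j) (hπ0 i j)
    have hzero : ∑ i, ∑ j, π i j * (u i - u j) = 0 := by
      have h1 : ∑ i, ∑ j, π i j * u i = (1/n) * ∑ i, u i := by
        rw [Finset.mul_sum]
        refine Finset.sum_congr rfl fun i _ => ?_
        rw [← Finset.sum_mul, hrow i]
      have h2 : ∑ i, ∑ j, π i j * u j = (1/n) * ∑ j, u j := by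
        rw [Finset.sum_comm, Finset.mul_sum]
        refine Finset.sum_congr rfl fun j _ => ?_
        rw [← Finset.sum_mul, hcol j]
      simp only [mul_sub]
      rw [Finset.sum_congr rfl fun i _ => Finset.sum_sub_distrib _ _,
        Finset.sum_sub_distrib, h1, h2, sub_self]
    linarith
end
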